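/- arXiv:1805.12559 — 8 statements merged into one kernel-verified Lean document; each statement's English description precedes it below -/
import Mathlib

section
/- Let n ≥ 2 be an integer and let δ be a real number with 0 < δ < 1/(2n). Let c_1 ≤ c_2 ≤ … ≤ c_m be a cut configuration in [0,n] with m ≤ n, and suppose that for every integer j with 2 ≤ j ≤ n and every label s ∈ {+,−}, the measure of s on the monitored interval [j−2,j] is strictly less than 1+δ. Then m ≥ n−1 and, for every index i with 1 ≤ i ≤ m−1, the gap between consecutive cuts satisfies 1 − 2nδ ≤ c_{i+1} − c_i ≤ 1 + 2δ. -/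
set_option maxHeartbeats 1000000


/-- The alternating labelling induced by a cut configuration `c` on `[0,n]`:
`+` (i.e. `true`) at `x` iff the number of cuts strictly below `x` is even. -/
noncomputable def cutLabel {m : ℕ} (c : Fin m → ℝ) (x : ℝ) : Bool :=
  decide (Even (Nat.card {i : Fin m // c i < x}))

/-- The Lebesgue measure of the set of points of the monitored interval `[j-2, j]`
carrying the label `s`. -/
noncomputable def labelMeasure {m : ℕ} (c : Fin m → ℝ) (j : ℕ) (s : Bool) : ENNReal :=
  MeasureTheory.volume {x : ℝ | x ∈ Set.Icc ((j : ℝ) - 2) (j : ℝ) ∧ cutLabel c x = s}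

noncomputable def st0bnd (n : ℕ) {m : ℕ} (c : Fin m → ℝ) (l : ℕ) : ℝ :=
  if l = 0 then 0 else if h2 : l - 1 < m then c ⟨l - 1, h2⟩ else n

section st0
variable {n m : ℕ} {c : Fin m → ℝ}

lemma st0bnd_zero : st0bnd n c 0 = 0 := rfl

lemma st0bnd_succ {i : ℕ} (h : i < m) : st0bnd n c (i+1) = c ⟨i, h⟩ := by
  simp only [st0bnd, if_neg (Nat.succ_ne_zero i), Nat.add_sub_cancel, dif_pos h]

lemma st0bnd_top {l : ℕ} (h : m ≤ l) : st0bnd n c (l+1) = n := by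
  simp only [st0bnd]
  rw [if_neg (by omega), dif_neg (by omega)]

lemma st0bnd_mono (hmono : Monotone c) (hrange : ∀ i, c i ∈ Set.Icc (0 : ℝ) n) :
    Monotone (st0bnd n c) := by
  apply monotone_nat_of_le_succ
  intro l
  match l with
  | 0 =>
    rw [st0bnd_zero]
    by_cases h1 : 0 < m
    · rw [st0bnd_succ h1]; exact (hrange _).1
    · rw [st0bnd_top (by omega)]; exact_mod_cast Nat.cast_nonneg n
  | (i+1) =>
    by_cases h1 : i < m
    · rw [st0bnd_succ h1]
      by_cases h2 : i + 1 < m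
      · rw [st0bnd_succ h2]
        exact hmono (by simp [Fin.le_def])
      · rw [st0bnd_top (by omega)]
        exact (hrange _).2
    · rw [st0bnd_top (by omega), st0bnd_top (by omega)]

lemma st0bnd_nonneg (hrange : ∀ i, c i ∈ Set.Icc (0 : ℝ) n) (l : ℕ) :
    0 ≤ st0bnd n c l := by
  unfold st0bnd
  split
  · exact le_refl 0
  · split
    · exact (hrange _).1
    · exact_mod_cast Nat.cast_nonneg n

lemma st0bnd_le (hrange : ∀ i, c i ∈ Set.Icc (0 : ℝ) n) (l : ℕ) :
    st0bnd n c l ≤ n := by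
  unfold st0bnd
  split
  · exact_mod_cast Nat.cast_nonneg n
  · split
    · exact (hrange _).2
    · exact le_refl _


lemma st0label_piece (hmono : Monotone c) (hrange : ∀ i, c i ∈ Set.Icc (0 : ℝ) n)
    {l : ℕ} (hl : l ≤ m) {x : ℝ} (hx1 : st0bnd n c l < x) (hx2 : x ≤ st0bnd n c (l+1)) :
    cutLabel c x = decide (Even l) := by
  have hbm := st0bnd_mono hmono hrange
  have hset : ∀ i : Fin m, c i < x ↔ (i : ℕ) < l := by
    intro i
    constructor
    · intro h
      by_contra hc
      push_neg at hc
      have : st0bnd n c (l+1) ≤ st0bnd n c (i+1) := hbm (by omega)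
      rw [st0bnd_succ i.isLt] at this
      linarith
    · intro h
      have : st0bnd n c ((i:ℕ)+1) ≤ st0bnd n c l := hbm (by omega)
      rw [st0bnd_succ i.isLt] at this
      linarith
  have hcard : Nat.card {i : Fin m // c i < x} = l := by
    rw [Nat.card_congr (Equiv.subtypeEquivRight hset)]
    have e : {i : Fin m // (i : ℕ) < l} ≃ Fin l :=
      { toFun := fun p => ⟨(p.1 : ℕ), p.2⟩
        invFun := fun q => ⟨⟨(q : ℕ), lt_of_lt_of_le q.isLt hl⟩, q.isLt⟩
        left_inv := fun p => by ext; rfl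
        right_inv := fun q => rfl }
    rw [Nat.card_congr e, Nat.card_eq_fintype_card, Fintype.card_fin l]
  rw [cutLabel, hcard]

open MeasureTheory in
lemma st0meas_ge (j : ℕ) (a bb : ℝ) (hja : (j:ℝ) - 2 ≤ a) (hbj : bb ≤ (j:ℝ)) (s : Bool)
    (hlab : ∀ x ∈ Set.Ioc a bb, cutLabel c x = s) :
    ENNReal.ofReal (bb - a) ≤ labelMeasure c j s := by
  rw [labelMeasure, ← Real.volume_Ioc]
  apply measure_mono
  intro x hx
  exact ⟨⟨le_trans hja (le_of_lt hx.1), le_trans hx.2 hbj⟩, hlab x hx⟩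

lemma st0no_long_piece (hn : 2 ≤ n) {δ : ℝ} (hδ0 : 0 < δ) (hδ1 : δ < 1 / (2 * n))
    (hmeas : ∀ j : ℕ, 2 ≤ j → j ≤ n → ∀ s : Bool,
      labelMeasure c j s < ENNReal.ofReal (1 + δ))
    (a bb : ℝ) (h0 : 0 ≤ a) (hbn : bb ≤ n) (s : Bool)
    (hlab : ∀ x ∈ Set.Ioc a bb, cutLabel c x = s) :
    bb - a ≤ 1 + 2 * δ := by
  have hn2 : (2:ℝ) ≤ (n:ℝ) := by exact_mod_cast hn
  have hδ4 : δ < 1/4 := by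
    have h2n : (0:ℝ) < 2 * n := by linarith
    rw [lt_div_iff₀ h2n] at hδ1
    nlinarith
  by_contra hcon
  push_neg at hcon
  set F : ℤ := ⌊a⌋ with hF
  have hF0 : 0 ≤ F := Int.floor_nonneg.2 h0
  have hFa : (F:ℝ) ≤ a := Int.floor_le a
  have haF : a < (F:ℝ) + 1 := Int.lt_floor_add_one a
  have han : a < (n:ℝ) - 1 - 2*δ := by linarith
  have key : ∀ (j : ℕ) (u v : ℝ), 2 ≤ j → j ≤ n → (j:ℝ) - 2 ≤ u → v ≤ (j:ℝ) →
      a ≤ u → v ≤ bb → (1:ℝ) + δ < v - u → False := by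
    intro j u v hj2 hjn hju hvj hau hvb hlen
    have h1 : ENNReal.ofReal (v - u) ≤ labelMeasure c j s := by
      apply st0meas_ge j u v hju hvj s
      intro x hx
      exact hlab x ⟨lt_of_le_of_lt hau hx.1, le_trans hx.2 hvb⟩
    have h2 := lt_of_le_of_lt h1 (hmeas j hj2 hjn s)
    rw [ENNReal.ofReal_lt_ofReal_iff (by linarith)] at h2
    linarith
  have hcastF : ∀ jn : ℕ, (jn : ℤ) = F + 2 → (jn : ℝ) = (F:ℝ) + 2 := by
    intro jn h
    have : ((jn:ℤ):ℝ) = ((F + 2 : ℤ):ℝ) := by exact_mod_cast congrArg (fun z : ℤ => (z:ℝ)) h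
    push_cast at this ⊢
    linarith
  by_cases hfr : a - (F:ℝ) < 1 - δ
  · -- use window j = F + 2
    have hFn : F ≤ (n:ℤ) - 2 := by
      have h1 : (F:ℝ) < (n:ℝ) - 1 := by linarith
      have h2 : F < (n:ℤ) - 1 := by exact_mod_cast h1
      omega
    have hcast : ((F.toNat + 2 : ℕ) : ℝ) = (F:ℝ) + 2 := by
      have h1 : ((F.toNat : ℤ):ℝ) = (F:ℝ) := by
        exact_mod_cast congrArg (fun z : ℤ => (z:ℝ)) (Int.toNat_of_nonneg hF0)
      push_cast at h1 ⊢
      linarith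
    refine key (F.toNat + 2) a (min bb ((F:ℝ) + 2)) (by omega) (by omega) ?_ ?_ le_rfl
      (min_le_left _ _) ?_
    · rw [hcast]; linarith
    · rw [hcast]; exact min_le_right _ _
    · rcases le_total bb ((F:ℝ) + 2) with h | h
      · rw [min_eq_left h]; linarith
      · rw [min_eq_right h]; linarith
  · -- use window j = F + 3
    push_neg at hfr
    have hFn : F ≤ (n:ℤ) - 3 := by
      have h1 : (F:ℝ) < (n:ℝ) - 2 := by linarith
      have h2 : F < (n:ℤ) - 2 := by exact_mod_cast h1
      omega
    have hcast : ((F.toNat + 3 : ℕ) : ℝ) = (F:ℝ) + 3 := by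
      have h1 : ((F.toNat : ℤ):ℝ) = (F:ℝ) := by
        exact_mod_cast congrArg (fun z : ℤ => (z:ℝ)) (Int.toNat_of_nonneg hF0)
      push_cast at h1 ⊢
      linarith
    refine key (F.toNat + 3) ((F:ℝ) + 1) (min bb ((F:ℝ) + 3)) (by omega) (by omega) ?_ ?_
      (by linarith) (min_le_left _ _) ?_
    · rw [hcast]; linarith
    · rw [hcast]; exact min_le_right _ _
    · rcases le_total bb ((F:ℝ) + 3) with h | h
      · rw [min_eq_left h]; linarith
      · rw [min_eq_right h]; linarith

open MeasureTheory Finset in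
lemma st0meas_eq (hmono : Monotone c) (hrange : ∀ i, c i ∈ Set.Icc (0 : ℝ) n)
    (j : ℕ) (hj2 : 2 ≤ j) (hjn : j ≤ n) (s : Bool) :
    labelMeasure c j s
      = ∑ l ∈ (Finset.range (m+1)).filter (fun l => decide (Even l) = s),
          ENNReal.ofReal (min (st0bnd n c (l+1)) (j:ℝ) - max (st0bnd n c l) ((j:ℝ)-2)) := by
  classical
  have hbm := st0bnd_mono hmono hrange
  have hj2R : (2:ℝ) ≤ (j:ℝ) := by exact_mod_cast hj2
  have hjnR : (j:ℝ) ≤ (n:ℝ) := by exact_mod_cast hjn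
  set f : ℕ → Set ℝ := fun l => Set.Ioc (max (st0bnd n c l) ((j:ℝ)-2)) (min (st0bnd n c (l+1)) (j:ℝ)) with hf
  set A : Set ℝ := {x : ℝ | x ∈ Set.Icc ((j : ℝ) - 2) (j : ℝ) ∧ cutLabel c x = s} with hA
  have hAU : A \ {(j:ℝ)-2} = ⋃ l ∈ (Finset.range (m+1)).filter (fun l => decide (Even l) = s), f l := by
    ext x
    simp only [Set.mem_diff, Set.mem_singleton_iff, Set.mem_iUnion, Finset.mem_filter,
      Finset.mem_range, hA, Set.mem_setOf_eq, Set.mem_Icc, hf, Set.mem_Ioc, exists_prop]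
    constructor
    · rintro ⟨⟨⟨hx1, hx2⟩, hxs⟩, hxne⟩
      have hx1' : (j:ℝ) - 2 < x := lt_of_le_of_ne hx1 (Ne.symm hxne)
      have hx0 : st0bnd n c 0 < x := by rw [st0bnd_zero]; linarith
      set l : ℕ := Nat.findGreatest (fun l => st0bnd n c l < x) m with hl
      have hPl : st0bnd n c l < x :=
        Nat.findGreatest_spec (P := fun l => st0bnd n c l < x) (Nat.zero_le m) hx0
      have hlm : l ≤ m := Nat.findGreatest_le m
      have hxle : x ≤ st0bnd n c (l+1) := by
        rcases eq_or_lt_of_le hlm with he | hlt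
        · rw [he, st0bnd_top le_rfl]; linarith
        · have hng := Nat.findGreatest_is_greatest (P := fun l => st0bnd n c l < x)
            (lt_add_one l) (by omega : l + 1 ≤ m)
          simp only [not_lt] at hng
          exact hng
      have hlabl := st0label_piece hmono hrange hlm hPl hxle
      refine ⟨l, ⟨by omega, by rw [← hxs, hlabl]⟩, ?_, ?_⟩
      · exact max_lt hPl hx1'
      · exact le_min hxle hx2
    · rintro ⟨l, ⟨hlr, hls⟩, hx1, hx2⟩
      have h1 : st0bnd n c l < x := lt_of_le_of_lt (le_max_left _ _) hx1
      have h2 : (j:ℝ) - 2 < x := lt_of_le_of_lt (le_max_right _ _) hx1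
      have h3 : x ≤ st0bnd n c (l+1) := le_trans hx2 (min_le_left _ _)
      have h4 : x ≤ (j:ℝ) := le_trans hx2 (min_le_right _ _)
      refine ⟨⟨⟨le_of_lt h2, h4⟩, ?_⟩, by linarith⟩
      rw [st0label_piece hmono hrange (by omega) h1 h3, hls]
  have hdisj : Set.PairwiseDisjoint
      ↑((Finset.range (m+1)).filter (fun l => decide (Even l) = s)) f := by
    have key : ∀ a b : ℕ, a < b → Disjoint (f a) (f b) := by
      intro a b hab
      rw [Set.disjoint_left]
      intro x hxa hxb
      have h1 : x ≤ st0bnd n c (a+1) := le_trans hxa.2 (min_le_left _ _)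
      have h2 : st0bnd n c (a+1) ≤ st0bnd n c b := hbm (by omega)
      have h3 : st0bnd n c b < x := lt_of_le_of_lt (le_max_left _ _) hxb.1
      linarith
    intro a _ b _ hab
    rcases lt_or_gt_of_ne hab with h | h
    · exact key a b h
    · exact (key b a h).symm
  have hres : volume A = volume (A \ {(j:ℝ)-2}) := (measure_diff_null (measure_singleton _)).symm
  rw [labelMeasure, ← hA, hres, hAU, measure_biUnion_finset hdisj (fun l _ => measurableSet_Ioc)]
  exact Finset.sum_congr rfl (fun l _ => Real.volume_Ioc)

lemma st0phi_raw (r u v : ℝ) (huv : u ≤ v) :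
    ENNReal.ofReal (min v r - max u (r-2))
      = ENNReal.ofReal ((max (r-2) (min v r)) - (max (r-2) (min u r))) := by
  rcases le_or_gt (max u (r-2)) (min v r) with h | h
  · have h1 : max (r-2) (min v r) = min v r := max_eq_right (le_trans (le_max_right u (r-2)) h)
    have hur : u ≤ r := by
      by_contra hc
      push_neg at hc
      have : min v r ≤ r := min_le_right _ _
      have : u ≤ max u (r-2) := le_max_left _ _
      linarith
    have h2 : max (r-2) (min u r) = max u (r-2) := by
      rw [min_eq_left hur, max_comm]
    rw [h1, h2]
  · have heq : max (r-2) (min v r) = max (r-2) (min u r) := by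
      rcases le_or_gt (min v r) (r-2) with h2 | h2
      · have h3 : min u r ≤ r - 2 := le_trans (min_le_min huv le_rfl) h2
        rw [max_eq_left h2, max_eq_left h3]
      · have h4 : u ≤ max u (r-2) := le_max_left _ _
        have h5 : min v r < u := by
          rcases max_cases u (r-2) with ⟨he, _⟩ | ⟨he, hle⟩
          · rw [he] at h; exact h
          · linarith
        have h6 : r < v := by
          by_contra hc
          push_neg at hc
          rw [min_eq_left hc] at h5
          linarith
        have h7 : r < u := by rw [min_eq_right (le_of_lt h6)] at h5; exact h5
        rw [min_eq_right (le_of_lt h6), min_eq_right (le_of_lt h7)]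
    rw [heq]
    have hz : max (r-2) (min u r) - max (r-2) (min u r) = 0 := by ring
    rw [hz, ENNReal.ofReal_zero, ENNReal.ofReal_eq_zero]
    have : min v r ≤ max u (r-2) := le_of_lt h
    linarith

lemma st0phi_min (r t : ℝ) : max (r-2) (min t r) = min t r - min t (r-2) + (r - 2) := by
  rcases le_total t (r-2) with h | h <;> rcases le_total t r with h2 | h2 <;>
    rw [min_def, min_def, max_def] <;> split_ifs <;> linarith

noncomputable def st0D (n : ℕ) {m : ℕ} (c : Fin m → ℝ) (x : ℝ) : ℝ :=
  ∑ l ∈ Finset.range (m+1), (-1:ℝ)^l * (min (st0bnd n c (l+1)) x - min (st0bnd n c l) x)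

open Finset in
lemma st0window (hmono : Monotone c) (hrange : ∀ i, c i ∈ Set.Icc (0 : ℝ) n)
    {δ : ℝ} (hδ0 : 0 < δ)
    (hmeas : ∀ j : ℕ, 2 ≤ j → j ≤ n → ∀ s : Bool,
      labelMeasure c j s < ENNReal.ofReal (1 + δ))
    (j : ℕ) (hj2 : 2 ≤ j) (hjn : j ≤ n) :
    |st0D n c (j:ℝ) - st0D n c ((j:ℝ)-2)| < 2*δ := by
  classical
  have hbm := st0bnd_mono hmono hrange
  have hj2R : (2:ℝ) ≤ (j:ℝ) := by exact_mod_cast hj2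
  have hjnR : (j:ℝ) ≤ (n:ℝ) := by exact_mod_cast hjn
  set r : ℝ := (j:ℝ) with hr
  set p : ℝ → ℝ := fun t => max (r-2) (min t r) with hp
  set ov : ℕ → ℝ := fun l => p (st0bnd n c (l+1)) - p (st0bnd n c l) with hov
  have hov0 : ∀ l, 0 ≤ ov l := by
    intro l
    have h1 : st0bnd n c l ≤ st0bnd n c (l+1) := hbm (Nat.le_succ l)
    have : p (st0bnd n c l) ≤ p (st0bnd n c (l+1)) :=
      max_le_max le_rfl (min_le_min h1 le_rfl)
    simp only [hov]
    linarith
  have hM : ∀ s : Bool, labelMeasure c j s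
      = ENNReal.ofReal (∑ l ∈ (range (m+1)).filter (fun l => decide (Even l) = s), ov l) := by
    intro s
    rw [st0meas_eq hmono hrange j hj2 hjn s,
      ENNReal.ofReal_sum_of_nonneg (fun l _ => hov0 l)]
    exact Finset.sum_congr rfl fun l _ => st0phi_raw r _ _ (hbm (Nat.le_succ l))
  have hs : ∀ s : Bool, ∑ l ∈ (range (m+1)).filter (fun l => decide (Even l) = s), ov l
      < 1 + δ := by
    intro s
    have h := hmeas j hj2 hjn s
    rw [hM s] at h
    exact (ENNReal.ofReal_lt_ofReal_iff (by linarith)).1 h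
  have htot : ∑ l ∈ range (m+1), ov l = 2 := by
    have htel : ∑ l ∈ range (m+1), ov l
        = p (st0bnd n c (m+1)) - p (st0bnd n c 0) :=
      Finset.sum_range_sub (fun l => p (st0bnd n c l)) (m+1)
    rw [htel, st0bnd_top le_rfl, st0bnd_zero]
    have h1 : p (n:ℝ) = r := by
      simp only [hp]
      rw [min_eq_right hjnR, max_eq_right (by linarith)]
    have h2 : p 0 = r - 2 := by
      simp only [hp]
      rw [min_eq_left (by linarith), max_eq_left (by linarith)]
    rw [h1, h2]
    ring
  have hnotf : (range (m+1)).filter (fun l => ¬ (decide (Even l) = true))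
      = (range (m+1)).filter (fun l => decide (Even l) = false) := by
    apply Finset.filter_congr
    intro l _
    simp
  have hsplit : (∑ l ∈ (range (m+1)).filter (fun l => decide (Even l) = true), ov l)
      + (∑ l ∈ (range (m+1)).filter (fun l => decide (Even l) = false), ov l) = 2 := by
    rw [← hnotf, Finset.sum_filter_add_sum_filter_not, htot]
  have hD : st0D n c r - st0D n c (r-2)
      = (∑ l ∈ (range (m+1)).filter (fun l => decide (Even l) = true), ov l)
        - (∑ l ∈ (range (m+1)).filter (fun l => decide (Even l) = false), ov l) := by
    have h1 : st0D n c r - st0D n c (r-2) = ∑ l ∈ range (m+1), (-1:ℝ)^l * ov l := by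
      rw [st0D, st0D, ← Finset.sum_sub_distrib]
      apply Finset.sum_congr rfl
      intro l _
      have e1 := st0phi_min r (st0bnd n c (l+1))
      have e2 := st0phi_min r (st0bnd n c l)
      simp only [hov, hp]
      rw [e1, e2]
      ring
    rw [h1, ← Finset.sum_filter_add_sum_filter_not (range (m+1))
      (fun l => decide (Even l) = true), hnotf]
    congr 1
    · apply Finset.sum_congr rfl
      intro l hl
      rw [Finset.mem_filter] at hl
      have : Even l := of_decide_eq_true hl.2
      rw [this.neg_one_pow, one_mul]
    · rw [← Finset.sum_neg_distrib]
      apply Finset.sum_congr rfl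
      intro l hl
      rw [Finset.mem_filter] at hl
      have : Odd l := Nat.not_even_iff_odd.1 (of_decide_eq_false hl.2)
      rw [this.neg_one_pow]
      ring
  rw [abs_lt]
  constructor
  · have := hs true
    have := hs false
    simp only [hr] at hD hsplit ⊢
    linarith [hD, hsplit, hs true, hs false]
  · simp only [hr] at hD hsplit ⊢
    linarith [hD, hsplit, hs true, hs false]

open Finset in
lemma st0Dpiece (hmono : Monotone c) (hrange : ∀ i, c i ∈ Set.Icc (0 : ℝ) n) (l : ℕ)
    (hl : l ≤ m) :
    st0D n c (st0bnd n c (l+1)) - st0D n c (st0bnd n c l)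
      = (-1:ℝ)^l * (st0bnd n c (l+1) - st0bnd n c l) := by
  have hbm := st0bnd_mono hmono hrange
  set x := st0bnd n c l with hx
  set y := st0bnd n c (l+1) with hy
  have hxy : x ≤ y := hbm (Nat.le_succ l)
  rw [st0D, st0D, ← Finset.sum_sub_distrib]
  rw [Finset.sum_eq_single l]
  · rw [min_eq_right hxy, min_self, min_self, min_eq_left hxy]
    ring
  · intro t _ htl
    rcases lt_or_gt_of_ne htl with h | h
    · have h1 : st0bnd n c (t+1) ≤ x := hbm (by omega)
      have h2 : st0bnd n c t ≤ x := hbm (by omega)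
      rw [min_eq_left (le_trans h1 hxy), min_eq_left (le_trans h2 hxy),
        min_eq_left h1, min_eq_left h2]
      ring
    · have h1 : y ≤ st0bnd n c t := hbm (by omega)
      have h2 : y ≤ st0bnd n c (t+1) := hbm (by omega)
      rw [min_eq_right (le_trans hxy h1)]
      rw [min_eq_right (le_trans hxy h2)]
      rw [min_eq_right h1, min_eq_right h2]
      ring
  · intro h
    exact absurd (Finset.mem_range.2 (by omega)) h

open Finset in
lemma st0Dlip (hmono : Monotone c) (hrange : ∀ i, c i ∈ Set.Icc (0 : ℝ) n) {x y : ℝ}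
    (h0 : 0 ≤ x) (hxy : x ≤ y) :
    |st0D n c y - st0D n c x| ≤ y - x := by
  have hbm := st0bnd_mono hmono hrange
  set ψ : ℝ → ℝ := fun t => min t y - min t x with hψ
  have hψmono : ∀ {t t' : ℝ}, t ≤ t' → ψ t ≤ ψ t' := by
    intro t t' h
    simp only [hψ]
    rw [min_def, min_def, min_def, min_def]
    split_ifs <;> linarith
  have h1 : st0D n c y - st0D n c x
      = ∑ t ∈ range (m+1), (-1:ℝ)^t * (ψ (st0bnd n c (t+1)) - ψ (st0bnd n c t)) := by
    rw [st0D, st0D, ← Finset.sum_sub_distrib]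
    apply Finset.sum_congr rfl
    intro t _
    simp only [hψ]
    ring
  rw [h1]
  calc |∑ t ∈ range (m+1), (-1:ℝ)^t * (ψ (st0bnd n c (t+1)) - ψ (st0bnd n c t))|
      ≤ ∑ t ∈ range (m+1), |(-1:ℝ)^t * (ψ (st0bnd n c (t+1)) - ψ (st0bnd n c t))| :=
        Finset.abs_sum_le_sum_abs _ _
    _ = ∑ t ∈ range (m+1), (ψ (st0bnd n c (t+1)) - ψ (st0bnd n c t)) := by
        apply Finset.sum_congr rfl
        intro t _
        rw [abs_mul, abs_pow, abs_neg, abs_one, one_pow, one_mul,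
          abs_of_nonneg (sub_nonneg.2 (hψmono (hbm (Nat.le_succ t))))]
    _ = ψ (st0bnd n c (m+1)) - ψ (st0bnd n c 0) :=
        Finset.sum_range_sub (fun t => ψ (st0bnd n c t)) (m+1)
    _ ≤ y - x := by
        rw [st0bnd_top le_rfl, st0bnd_zero]
        simp only [hψ]
        rw [min_eq_left (by linarith : (0:ℝ) ≤ y), min_eq_left h0]
        rw [min_def, min_def]
        split_ifs <;> linarith

lemma st0Dlip' (hmono : Monotone c) (hrange : ∀ i, c i ∈ Set.Icc (0 : ℝ) n) {x y : ℝ}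
    (h0x : 0 ≤ x) (h0y : 0 ≤ y) :
    |st0D n c y - st0D n c x| ≤ |y - x| := by
  rcases le_total x y with h | h
  · rw [abs_of_nonneg (by linarith : (0:ℝ) ≤ y - x)]
    exact st0Dlip hmono hrange h0x h
  · rw [abs_sub_comm, abs_of_nonpos (by linarith : y - x ≤ 0)]
    have := st0Dlip hmono hrange h0y h
    linarith [this]

end st0


open Finset

theorem stmt0 (n : ℕ) (hn : 2 ≤ n) (δ : ℝ) (hδ0 : 0 < δ) (hδ1 : δ < 1 / (2 * n))
    (m : ℕ) (hm : m ≤ n) (c : Fin m → ℝ) (hmono : Monotone c)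
    (hrange : ∀ i, c i ∈ Set.Icc (0 : ℝ) n)
    (hmeas : ∀ j : ℕ, 2 ≤ j → j ≤ n → ∀ s : Bool,
      labelMeasure c j s < ENNReal.ofReal (1 + δ)) :
    n - 1 ≤ m ∧
      ∀ (i : ℕ) (hi : i + 1 < m),
        1 - 2 * n * δ ≤ c ⟨i + 1, hi⟩ - c ⟨i, Nat.lt_of_succ_lt hi⟩ ∧
        c ⟨i + 1, hi⟩ - c ⟨i, Nat.lt_of_succ_lt hi⟩ ≤ 1 + 2 * δ := by
  have hbm := st0bnd_mono hmono hrange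
  have hn2 : (2:ℝ) ≤ (n:ℝ) := by exact_mod_cast hn
  have h2nδ : 2*(n:ℝ)*δ < 1 := by
    rw [lt_div_iff₀ (by linarith : (0:ℝ) < 2*(n:ℝ))] at hδ1
    linarith
  have hgap : ∀ l : ℕ, l ≤ m → st0bnd n c (l+1) - st0bnd n c l ≤ 1 + 2*δ := by
    intro l hl
    apply st0no_long_piece hn hδ0 hδ1 hmeas _ _ (st0bnd_nonneg hrange l)
      (st0bnd_le hrange (l+1)) (decide (Even l))
    intro x hx
    exact st0label_piece hmono hrange hl hx.1 hx.2
  have hsum : ∑ l ∈ range (m+1), (st0bnd n c (l+1) - st0bnd n c l) = (n:ℝ) := by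
    rw [Finset.sum_range_sub (fun l => st0bnd n c l) (m+1), st0bnd_top le_rfl, st0bnd_zero,
      sub_zero]
  have hpart1 : n - 1 ≤ m := by
    by_contra hc
    push_neg at hc
    have hmn : m + 2 ≤ n := by omega
    have hmnR : (m:ℝ) + 2 ≤ (n:ℝ) := by exact_mod_cast hmn
    have h1 : ∑ l ∈ range (m+1), (st0bnd n c (l+1) - st0bnd n c l)
        ≤ (range (m+1)).card • (1 + 2*δ) :=
      Finset.sum_le_card_nsmul _ _ _ (fun l hl => hgap l (by
        have := Finset.mem_range.1 hl; omega))
    rw [hsum, Finset.card_range, nsmul_eq_mul] at h1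
    push_cast at h1
    nlinarith [h1, h2nδ, hδ0, hmnR]
  refine ⟨hpart1, ?_⟩
  intro i hi
  have hi2m : i + 2 ≤ m := hi
  rw [← st0bnd_succ (n := n) (c := c) hi, ← st0bnd_succ (n := n) (c := c) (Nat.lt_of_succ_lt hi)]
  constructor
  · show 1 - 2*(n:ℝ)*δ ≤ st0bnd n c (i+2) - st0bnd n c (i+1)
    rcases (by omega : m = n ∨ m + 1 = n) with hmn | hmn
    · -- m = n : the D-function argument
      have hiR : (i:ℝ) ≤ (n:ℝ) - 2 := by
        have : (i:ℝ) + 2 ≤ (n:ℝ) := by exact_mod_cast (by omega : i + 2 ≤ n)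
        linarith
      have hiδ : (i:ℝ)*δ ≤ ((n:ℝ)-2)*δ := mul_le_mul_of_nonneg_right hiR (le_of_lt hδ0)
      have hiδ0 : 0 ≤ (i:ℝ)*δ := by positivity
      have hwin := st0window hmono hrange hδ0 hmeas (i+2) (by omega) (by omega)
      have hc1 : ((i+2:ℕ):ℝ) = (i:ℝ)+2 := by push_cast; ring
      rw [hc1, (by ring : (i:ℝ)+2-2 = (i:ℝ))] at hwin
      have hp1 := st0Dpiece hmono hrange i (by omega)
      have hp2 := st0Dpiece hmono hrange (i+1) (by omega)
      have hp3 := st0Dpiece hmono hrange (i+2) (by omega)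
      rw [(by rw [pow_succ]; ring : (-1:ℝ)^(i+1) = -(-1:ℝ)^i)] at hp2
      rw [(by rw [pow_succ, pow_succ]; ring : (-1:ℝ)^(i+2) = (-1:ℝ)^i)] at hp3
      have h3 : st0D n c (st0bnd n c (i+3)) - st0D n c (st0bnd n c i)
          = (-1:ℝ)^i * ((st0bnd n c (i+1) - st0bnd n c i)
            - (st0bnd n c (i+2) - st0bnd n c (i+1))
            + (st0bnd n c (i+3) - st0bnd n c (i+2))) := by
        have e2 : st0bnd n c (i+1+1) = st0bnd n c (i+2) := rfl
        have e3 : st0bnd n c (i+2+1) = st0bnd n c (i+3) := rfl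
        rw [e2] at hp2
        rw [e2, e3] at hp3
        linear_combination hp1 + hp2 + hp3
      have habs : (st0bnd n c (i+1) - st0bnd n c i) + (st0bnd n c (i+3) - st0bnd n c (i+2))
            - (st0bnd n c (i+2) - st0bnd n c (i+1))
          ≤ |st0D n c (st0bnd n c (i+3)) - st0D n c (st0bnd n c i)| := by
        rw [h3, abs_mul, abs_pow, abs_neg, abs_one, one_pow, one_mul]
        have := le_abs_self ((st0bnd n c (i+1) - st0bnd n c i)
            - (st0bnd n c (i+2) - st0bnd n c (i+1))
            + (st0bnd n c (i+3) - st0bnd n c (i+2)))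
        linarith
      have htri : |st0D n c (st0bnd n c (i+3)) - st0D n c (st0bnd n c i)|
          ≤ |st0D n c (st0bnd n c (i+3)) - st0D n c ((i:ℝ)+2)|
            + |st0D n c ((i:ℝ)+2) - st0D n c ((i:ℝ))|
            + |st0D n c ((i:ℝ)) - st0D n c (st0bnd n c i)| := by
        have t1 := abs_sub_le (st0D n c (st0bnd n c (i+3))) (st0D n c ((i:ℝ)+2))
          (st0D n c (st0bnd n c i))
        have t2 := abs_sub_le (st0D n c ((i:ℝ)+2)) (st0D n c ((i:ℝ)))
          (st0D n c (st0bnd n c i))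
        linarith
      have hl1 : |st0D n c (st0bnd n c (i+3)) - st0D n c ((i:ℝ)+2)|
          ≤ |st0bnd n c (i+3) - ((i:ℝ)+2)| :=
        st0Dlip' hmono hrange (by positivity) (st0bnd_nonneg hrange (i+3))
      have hl2 : |st0D n c ((i:ℝ)) - st0D n c (st0bnd n c i)|
          ≤ |(i:ℝ) - st0bnd n c i| :=
        st0Dlip' hmono hrange (st0bnd_nonneg hrange i) (by positivity)
      rw [abs_sub_comm ((i:ℝ)) (st0bnd n c i)] at hl2
      -- position bounds
      have hAub : st0bnd n c i - (i:ℝ) ≤ 2*(i:ℝ)*δ := by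
        have hbi : st0bnd n c i = ∑ l ∈ range i, (st0bnd n c (l+1) - st0bnd n c l) := by
          rw [Finset.sum_range_sub (fun l => st0bnd n c l) i, st0bnd_zero, sub_zero]
        have h1 : ∑ l ∈ range i, (st0bnd n c (l+1) - st0bnd n c l)
            ≤ (range i).card • (1 + 2*δ) :=
          Finset.sum_le_card_nsmul _ _ _ (fun l hl => hgap l (by
            have := Finset.mem_range.1 hl; omega))
        rw [Finset.card_range, nsmul_eq_mul] at h1
        have : (i:ℝ) * (1 + 2*δ) = (i:ℝ) + 2*(i:ℝ)*δ := by ring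
        rw [this] at h1
        linarith [hbi ▸ h1]
      have hBlb : -(2*((n:ℝ)-(i:ℝ)-2)*δ) ≤ st0bnd n c (i+3) - ((i:ℝ)+2) := by
        have hb3 : st0bnd n c (i+3) = ∑ l ∈ range (i+3), (st0bnd n c (l+1) - st0bnd n c l) := by
          rw [Finset.sum_range_sub (fun l => st0bnd n c l) (i+3), st0bnd_zero, sub_zero]
        have hsp : (∑ l ∈ Finset.Ico 0 (i+3), (st0bnd n c (l+1) - st0bnd n c l))
            + ∑ l ∈ Finset.Ico (i+3) (m+1), (st0bnd n c (l+1) - st0bnd n c l)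
            = ∑ l ∈ Finset.Ico 0 (m+1), (st0bnd n c (l+1) - st0bnd n c l) :=
          Finset.sum_Ico_consecutive _ (by omega) (by omega)
        rw [← Finset.range_eq_Ico, ← Finset.range_eq_Ico] at hsp
        have h1 : ∑ l ∈ Finset.Ico (i+3) (m+1), (st0bnd n c (l+1) - st0bnd n c l)
            ≤ (Finset.Ico (i+3) (m+1)).card • (1 + 2*δ) :=
          Finset.sum_le_card_nsmul _ _ _ (fun l hl => hgap l (by
            have := (Finset.mem_Ico.1 hl).2; omega))
        rw [Nat.card_Ico, nsmul_eq_mul] at h1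
        have hcard : ((m + 1 - (i+3) : ℕ):ℝ) = (n:ℝ) - (i:ℝ) - 2 := by
          have h6 : m + 1 - (i+3) = m - (i+2) := by omega
          rw [h6]
          have h5 : (m - (i + 2)) + (i + 2) = n := by omega
          have := congrArg (fun t : ℕ => (t:ℝ)) h5
          push_cast at this
          linarith
        rw [hcard] at h1
        rw [hsum] at hsp
        nlinarith [h1, hsp, hb3]
      have hBA : st0bnd n c (i+3) - st0bnd n c i
          = (st0bnd n c (i+1) - st0bnd n c i) + (st0bnd n c (i+2) - st0bnd n c (i+1))
            + (st0bnd n c (i+3) - st0bnd n c (i+2)) := by ring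
      rcases abs_cases (st0bnd n c i - (i:ℝ)) with ⟨hA1, _⟩ | ⟨hA1, _⟩ <;>
        rcases abs_cases (st0bnd n c (i+3) - ((i:ℝ)+2)) with ⟨hB1, _⟩ | ⟨hB1, _⟩ <;>
        (rw [hA1] at hl2; rw [hB1] at hl1) <;>
        linarith [habs, htri, hl1, hl2, hwin, hAub, hBlb, hBA, hδ0, hiδ, hiδ0]
    · -- m = n - 1 : counting argument
      have hkmem : (i+1) ∈ range (m+1) := Finset.mem_range.2 (by omega)
      have herase : (∑ l ∈ (range (m+1)).erase (i+1), (st0bnd n c (l+1) - st0bnd n c l))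
          + (st0bnd n c (i+1+1) - st0bnd n c (i+1))
          = ∑ l ∈ range (m+1), (st0bnd n c (l+1) - st0bnd n c l) :=
        Finset.sum_erase_add _ _ hkmem
      have h1 : ∑ l ∈ (range (m+1)).erase (i+1), (st0bnd n c (l+1) - st0bnd n c l)
          ≤ ((range (m+1)).erase (i+1)).card • (1 + 2*δ) :=
        Finset.sum_le_card_nsmul _ _ _ (fun l hl => hgap l (by
          have := Finset.mem_range.1 (Finset.mem_of_mem_erase hl); omega))
      rw [Finset.card_erase_of_mem hkmem, Finset.card_range, nsmul_eq_mul] at h1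
      have hmR : ((m + 1 - 1 : ℕ):ℝ) = (n:ℝ) - 1 := by
        have h6 : m + 1 - 1 = m := by omega
        rw [h6]
        have h5 : m + 1 = n := by omega
        have := congrArg (fun t : ℕ => (t:ℝ)) h5
        push_cast at this
        linarith
      rw [hmR] at h1
      rw [hsum] at herase
      have hexp : ((n:ℝ) - 1) * (1 + 2*δ) = (n:ℝ) - 1 + 2*(n:ℝ)*δ - 2*δ := by ring
      rw [hexp] at h1
      have e2 : st0bnd n c (i+1+1) = st0bnd n c (i+2) := rfl
      rw [e2] at herase
      linarith [h1, herase, hδ0]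
  · exact hgap (i+1) (by omega)
end

section
/- Let n ≥ 2 be an integer, let δ be a real number with 0 < δ < 1/(2n), and let k, ℓ be integers with 2 ≤ k and 0 ≤ ℓ ≤ n − k. Let c_1 ≤ … ≤ c_m be a cut configuration in [0,n] such that at most k−2 of the cuts lie in the interval [ℓ, ℓ+k]. Then there exist an integer j with 2 ≤ j ≤ n and a closed interval J of length at least 1+δ with J ⊆ [ℓ, ℓ+k], J ⊆ [j−2, j], and no cut in the interior of J; in particular, some label has measure at least 1+δ on the monitored interval [j−2,j]. -/
lemma lower_filter {m : ℕ} (Q : Fin m → Prop) [DecidablePred Q]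
    (hQ : ∀ i j : Fin m, i ≤ j → Q j → Q i) (i : Fin m) :
    Q i ↔ i.val < (Finset.univ.filter Q).card := by
  constructor
  · intro hi
    have hsub : Finset.Iic i ⊆ Finset.univ.filter Q := by
      intro j hj
      simp only [Finset.mem_Iic] at hj
      simp only [Finset.mem_filter, Finset.mem_univ, true_and]
      exact hQ j i hj hi
    have := Finset.card_le_card hsub
    rw [Fin.card_Iic] at this
    omega
  · intro hi
    by_contra hQi
    have hsub : Finset.univ.filter Q ⊆ Finset.Iio i := by
      intro j hj
      simp only [Finset.mem_filter, Finset.mem_univ, true_and] at hj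
      simp only [Finset.mem_Iio]
      by_contra h
      exact hQi (hQ i j (le_of_not_gt h) hj)
    have := Finset.card_le_card hsub
    rw [Fin.card_Iio] at this
    omega

lemma measure_lemma {m : ℕ} (c : Fin m → ℝ) (j : ℕ) (a b : ℝ)
    (hsub : Set.Icc a b ⊆ Set.Icc ((j:ℝ) - 2) (j:ℝ))
    (hcut : ∀ i, c i ∉ Set.Ioo a b) :
    ∃ s : Bool, ENNReal.ofReal (b - a) ≤ labelMeasure c j s := by
  refine ⟨cutLabel c b, ?_⟩
  have hlab : ∀ x ∈ Set.Ioc a b, cutLabel c x = cutLabel c b := by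
    intro x hx
    have hset : {i : Fin m // c i < x} = {i : Fin m // c i < b} := by
      congr 1
      ext i
      constructor
      · intro h; exact lt_of_lt_of_le h hx.2
      · intro h
        rcases lt_or_ge (c i) x with h'|h'
        · exact h'
        · exact absurd ⟨lt_of_lt_of_le hx.1 h', h⟩ (hcut i)
    unfold cutLabel
    rw [hset]
  have hsub2 : Set.Ioc a b ⊆ {x : ℝ | x ∈ Set.Icc ((j:ℝ) - 2) (j:ℝ) ∧ cutLabel c x = cutLabel c b} := by
    intro x hx
    exact ⟨hsub ⟨le_of_lt hx.1, hx.2⟩, hlab x hx⟩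
  calc ENNReal.ofReal (b - a) = MeasureTheory.volume (Set.Ioc a b) := (Real.volume_Ioc).symm
    _ ≤ _ := MeasureTheory.measure_mono hsub2

theorem stmt1 (n : ℕ) (hn : 2 ≤ n) (δ : ℝ) (hδ0 : 0 < δ) (hδ1 : δ < 1 / (2 * n))
    (k ℓ : ℕ) (hk : 2 ≤ k) (hkl : ℓ + k ≤ n)
    (m : ℕ) (c : Fin m → ℝ) (hmono : Monotone c)
    (hrange : ∀ i, c i ∈ Set.Icc (0 : ℝ) n)
    (hcuts : Nat.card {i : Fin m // (ℓ : ℝ) ≤ c i ∧ c i ≤ (ℓ : ℝ) + k} ≤ k - 2) :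
    ∃ j : ℕ, 2 ≤ j ∧ j ≤ n ∧
      ∃ a b : ℝ, 1 + δ ≤ b - a ∧
        Set.Icc a b ⊆ Set.Icc (ℓ : ℝ) ((ℓ : ℝ) + k) ∧
        Set.Icc a b ⊆ Set.Icc ((j : ℝ) - 2) (j : ℝ) ∧
        (∀ i, c i ∉ Set.Ioo a b) ∧
        ∃ s : Bool, ENNReal.ofReal (1 + δ) ≤ labelMeasure c j s := by
  classical
  -- basic real facts
  have hn0 : (0:ℝ) < n := by exact_mod_cast Nat.lt_of_lt_of_le (by norm_num) hn
  have hn2 : (2:ℝ) ≤ n := by exact_mod_cast hn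
  have hδn : δ * (2 * (n:ℝ)) < 1 := by
    have h2n : (0:ℝ) < 2 * n := by linarith
    exact (lt_div_iff₀ h2n).mp hδ1
  have hδ1' : δ < 1 := by nlinarith
  have hℓkn : (ℓ:ℝ) + k ≤ n := by exact_mod_cast hkl
  have hkn : (k:ℝ) ≤ n := by
    have : (k:ℕ) ≤ n := by omega
    exact_mod_cast this
  have hℓ0 : (0:ℝ) ≤ ℓ := Nat.cast_nonneg ℓ
  -- counting cuts
  set p := (Finset.univ.filter (fun i : Fin m => c i < (ℓ:ℝ))).card with hp_def
  set P := (Finset.univ.filter (fun i : Fin m => c i ≤ (ℓ:ℝ) + k)).card with hP_def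
  have hp : ∀ i : Fin m, c i < (ℓ:ℝ) ↔ i.val < p :=
    lower_filter _ (fun i j hij hj => lt_of_le_of_lt (hmono hij) hj)
  have hP : ∀ i : Fin m, c i ≤ (ℓ:ℝ) + k ↔ i.val < P :=
    lower_filter _ (fun i j hij hj => le_trans (hmono hij) hj)
  have hfsub : (Finset.univ.filter (fun i : Fin m => c i < (ℓ:ℝ)))
      ⊆ (Finset.univ.filter (fun i : Fin m => c i ≤ (ℓ:ℝ) + k)) := by
    intro i hi
    simp only [Finset.mem_filter, Finset.mem_univ, true_and] at hi ⊢
    linarith [Nat.cast_nonneg (α := ℝ) k]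
  have hpP : p ≤ P := Finset.card_le_card hfsub
  have hPm : P ≤ m := by
    have := Finset.card_filter_le (Finset.univ : Finset (Fin m)) (fun i => c i ≤ (ℓ:ℝ) + k)
    simpa using this
  have hcard : Nat.card {i : Fin m // (ℓ : ℝ) ≤ c i ∧ c i ≤ (ℓ : ℝ) + k} = P - p := by
    rw [Nat.card_eq_fintype_card, Fintype.card_subtype]
    have hset : (Finset.univ.filter (fun i : Fin m => (ℓ:ℝ) ≤ c i ∧ c i ≤ (ℓ:ℝ) + k))
        = (Finset.univ.filter (fun i : Fin m => c i ≤ (ℓ:ℝ) + k))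
          \ (Finset.univ.filter (fun i : Fin m => c i < (ℓ:ℝ))) := by
      ext i
      simp only [Finset.mem_filter, Finset.mem_univ, true_and, Finset.mem_sdiff, not_lt]
      tauto
    rw [hset, Finset.card_sdiff_of_subset hfsub]
  set t := P - p with ht_def
  have htk : t + 2 ≤ k := by
    rw [hcard] at hcuts
    omega
  have hpt : p + t = P := by omega
  -- the gap endpoints
  set d : ℕ → ℝ := fun i => if h : i < m then c ⟨i, h⟩ else 0 with hd_def
  set q : ℕ → ℝ := fun r => if r = 0 then (ℓ:ℝ) else if r ≤ t then d (p + r - 1) else (ℓ:ℝ) + k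
    with hq_def
  have hidx : ∀ r, 1 ≤ r → r ≤ t → p + r - 1 < m := by intro r h1 h2; omega
  have hdc : ∀ (i : ℕ) (h : i < m), d i = c ⟨i, h⟩ := by
    intro i h; simp [hd_def, h]
  have hq0 : q 0 = (ℓ:ℝ) := by simp [hq_def]
  have hqt : q (t+1) = (ℓ:ℝ) + k := by simp [hq_def]
  have hqmid : ∀ r, 1 ≤ r → r ≤ t → ∀ h : p + r - 1 < m, q r = c ⟨p + r - 1, h⟩ := by
    intro r h1 h2 h
    simp only [hq_def]
    rw [if_neg (by omega), if_pos h2, hdc _ h]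
  have hstep : ∀ r, q r ≤ q (r+1) := by
    intro r
    rcases Nat.eq_zero_or_pos r with hr0 | hr1
    · subst hr0
      rcases Nat.eq_zero_or_pos t with ht0 | ht1
      · rw [hq0]
        have : q 1 = (ℓ:ℝ) + k := by simp [hq_def, ht0]
        rw [this]; linarith [Nat.cast_nonneg (α := ℝ) k]
      · have hm : p + 1 - 1 < m := hidx 1 le_rfl ht1
        rw [hq0, hqmid 1 le_rfl ht1 hm]
        have : ¬ (c ⟨p + 1 - 1, hm⟩ < (ℓ:ℝ)) := by
          rw [hp]; exact show ¬ (p + 1 - 1 < p) by omega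
        linarith [not_lt.mp this]
    · rcases lt_or_ge r t with hrt | hrt
      · -- 1 ≤ r < t : both cut values
        have hm1 : p + r - 1 < m := hidx r hr1 (le_of_lt hrt)
        have hm2 : p + (r+1) - 1 < m := hidx (r+1) (by omega) hrt
        rw [hqmid r hr1 (le_of_lt hrt) hm1, hqmid (r+1) (by omega) hrt hm2]
        exact hmono (by simp only [Fin.le_def]; omega)
      · rcases eq_or_lt_of_le hrt with hrt' | hrt'
        · -- r = t ≥ 1
          have hrle : r ≤ t := le_of_eq hrt'.symm
          have hm1 : p + r - 1 < m := hidx r hr1 hrle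
          rw [hqmid r hr1 hrle hm1]
          have hq1 : q (r+1) = (ℓ:ℝ) + k := by
            simp only [hq_def]; rw [if_neg (by omega), if_neg (by omega)]
          rw [hq1]
          have : c ⟨p + r - 1, hm1⟩ ≤ (ℓ:ℝ) + k := by
            rw [hP]; exact show p + r - 1 < P by omega
          exact this
        · -- r > t
          have hq1 : q r = (ℓ:ℝ) + k := by
            simp only [hq_def]; rw [if_neg (by omega), if_neg (by omega)]
          have hq2 : q (r+1) = (ℓ:ℝ) + k := by
            simp only [hq_def]; rw [if_neg (by omega), if_neg (by omega)]
          rw [hq1, hq2]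
  have hqmono : Monotone q := monotone_nat_of_le_succ hstep
  -- pigeonhole
  have hsum : ∑ r ∈ Finset.range (t+1), (q (r+1) - q r) = (k:ℝ) := by
    rw [Finset.sum_range_sub q (t+1), hq0, hqt]; ring
  have hex : ∃ r ∈ Finset.range (t+1), (k:ℝ)/(t+1) ≤ q (r+1) - q r := by
    by_contra hcon
    push_neg at hcon
    have hlt : ∑ r ∈ Finset.range (t+1), (q (r+1) - q r)
        < ∑ _r ∈ Finset.range (t+1), (k:ℝ)/(t+1) :=
      Finset.sum_lt_sum_of_nonempty ⟨0, by simp⟩ hcon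
    rw [hsum, Finset.sum_const, Finset.card_range, nsmul_eq_mul] at hlt
    have hcast : ((t+1:ℕ):ℝ) = (t:ℝ)+1 := by push_cast; ring
    have hmul : ((t:ℝ)+1) * ((k:ℝ)/((t:ℝ)+1)) = (k:ℝ) := by
      field_simp
    rw [hcast, hmul] at hlt
    exact lt_irrefl _ hlt
  obtain ⟨r, hrmem, hgap⟩ := hex
  have hrt : r ≤ t := by simpa [Nat.lt_succ_iff] using hrmem
  set a0 := q r with ha0_def
  set b0 := q (r+1) with hb0_def
  have hℓa0 : (ℓ:ℝ) ≤ a0 := by rw [← hq0]; exact hqmono (Nat.zero_le r)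
  have hb0ℓk : b0 ≤ (ℓ:ℝ) + k := by rw [← hqt]; exact hqmono (by omega)
  -- gap size
  have htk' : (t:ℝ) + 1 ≤ (k:ℝ) - 1 := by
    have : (t:ℕ) + 2 ≤ k := htk
    have := (Nat.cast_le (α := ℝ)).mpr this
    push_cast at this; linarith
  have hgap2 : 1 + 2*δ ≤ b0 - a0 := by
    refine le_trans ?_ hgap
    rw [le_div_iff₀ (by positivity : (0:ℝ) < (t:ℝ)+1)]
    have hkn' : (k:ℝ) - 1 ≤ n := by linarith
    nlinarith
  have ha0b0 : a0 < b0 := by linarith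
  have hb0n : b0 ≤ (n:ℝ) := le_trans hb0ℓk hℓkn
  have ha00 : (0:ℝ) ≤ a0 := le_trans hℓ0 hℓa0
  -- no cuts in the gap
  have hnocut : ∀ i : Fin m, c i ∉ Set.Ioo a0 b0 := by
    intro i hi
    obtain ⟨h1, h2⟩ := hi
    rcases lt_or_ge i.val p with hip | hip
    · have : c i < (ℓ:ℝ) := (hp i).mpr hip
      linarith
    · rcases le_or_gt P i.val with hiP | hiP
      · have : ¬ (c i ≤ (ℓ:ℝ) + k) := by rw [hP]; omega
        push_neg at this
        linarith
      · rcases lt_or_ge i.val (p + r) with hir | hir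
        · -- c i ≤ a0
          have hr1 : 1 ≤ r := by omega
          have hm1 : p + r - 1 < m := hidx r hr1 hrt
          have : c i ≤ c ⟨p + r - 1, hm1⟩ := hmono (by simp only [Fin.le_def]; omega)
          rw [← hqmid r hr1 hrt hm1] at this
          exact absurd h1 (not_lt.mpr this)
        · -- b0 ≤ c i
          have hr1 : r + 1 ≤ t := by omega
          have hm2 : p + (r+1) - 1 < m := hidx (r+1) (by omega) hr1
          have : c ⟨p + (r+1) - 1, hm2⟩ ≤ c i := hmono (by simp only [Fin.le_def]; omega)
          rw [← hqmid (r+1) (by omega) hr1 hm2] at this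
          exact absurd h2 (not_lt.mpr this)
  -- choose the monitored interval
  set R := (⌊a0⌋).toNat with hR_def
  have hfl0 : (0:ℤ) ≤ ⌊a0⌋ := Int.floor_nonneg.mpr ha00
  have hRfl : (R:ℝ) = (⌊a0⌋ : ℝ) := by
    rw [hR_def]; exact_mod_cast Int.toNat_of_nonneg hfl0
  have hRle : (R:ℝ) ≤ a0 := by rw [hRfl]; exact Int.floor_le a0
  have hRgt : a0 < (R:ℝ) + 1 := by rw [hRfl]; exact Int.lt_floor_add_one a0
  rcases le_or_gt a0 ((R:ℝ) + 1 - δ) with hcase | hcase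
  · -- j = R + 2, a = a0, b = min b0 (R+2)
    refine ⟨R + 2, by omega, ?_, a0, min b0 ((R:ℝ)+2), ?_, ?_, ?_, ?_, ?_⟩
    · -- R + 2 ≤ n
      have h1 : (R:ℝ) + 1 < n := by linarith
      have h2 : ((R+1:ℕ):ℝ) < (n:ℝ) := by push_cast; linarith
      have := (Nat.cast_lt (α := ℝ)).mp h2
      omega
    · -- length
      exact le_sub_iff_add_le.mpr (le_min (by linarith) (by linarith))
    · exact Set.Icc_subset_Icc hℓa0 (le_trans (min_le_left _ _) hb0ℓk)
    · refine Set.Icc_subset_Icc ?_ ?_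
      · push_cast; linarith
      · push_cast; exact min_le_right _ _
    · intro i hi
      exact hnocut i (Set.Ioo_subset_Ioo le_rfl (min_le_left _ _) hi)
    · obtain ⟨s, hs⟩ := measure_lemma c (R+2) a0 (min b0 ((R:ℝ)+2))
        (Set.Icc_subset_Icc (by push_cast; linarith) (by push_cast; exact min_le_right _ _))
        (fun i hi => hnocut i (Set.Ioo_subset_Ioo le_rfl (min_le_left _ _) hi))
      exact ⟨s, le_trans (ENNReal.ofReal_le_ofReal
        (le_sub_iff_add_le.mpr (le_min (by linarith) (by linarith)))) hs⟩
  · -- j = R + 3, a = R+1, b = min b0 (R+2+δ)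
    refine ⟨R + 3, by omega, ?_, (R:ℝ)+1, min b0 ((R:ℝ)+2+δ), ?_, ?_, ?_, ?_, ?_⟩
    · -- R + 3 ≤ n
      have h1 : (R:ℝ) + 2 < n := by linarith
      have h2 : ((R+2:ℕ):ℝ) < (n:ℝ) := by push_cast; linarith
      have := (Nat.cast_lt (α := ℝ)).mp h2
      omega
    · exact le_sub_iff_add_le.mpr (le_min (by linarith) (by linarith))
    · refine Set.Icc_subset_Icc (by linarith) (le_trans (min_le_left _ _) hb0ℓk)
    · refine Set.Icc_subset_Icc ?_ ?_
      · push_cast; linarith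
      · push_cast
        refine le_trans (min_le_right _ _) (by linarith)
    · intro i hi
      refine hnocut i (Set.Ioo_subset_Ioo (by linarith) (min_le_left _ _) hi)
    · obtain ⟨s, hs⟩ := measure_lemma c (R+3) ((R:ℝ)+1) (min b0 ((R:ℝ)+2+δ))
        (Set.Icc_subset_Icc (by push_cast; linarith)
          (by push_cast; exact le_trans (min_le_right _ _) (by linarith)))
        (fun i hi => hnocut i (Set.Ioo_subset_Ioo (by linarith) (min_le_left _ _) hi))
      exact ⟨s, le_trans (ENNReal.ofReal_le_ofReal
        (le_sub_iff_add_le.mpr (le_min (by linarith) (by linarith)))) hs⟩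
end

section
/- Let n ≥ 2 be an integer and let δ be a real number with 0 < δ < 1/(2n). Let c_1 ≤ … ≤ c_m be a cut configuration in [0,n]. If two consecutive cuts satisfy c_{i+1} − c_i > 1 + 2δ, then there exist an integer j with 2 ≤ j ≤ n and a label s ∈ {+,−} such that the measure of s on the monitored interval [j−2,j] is at least 1+δ; indeed, there is an uncut subinterval of [j−2,j] of length at least 1+δ. -/
theorem stmt3 (n : ℕ) (hn : 2 ≤ n) (δ : ℝ) (hδ0 : 0 < δ) (hδ1 : δ < 1 / (2 * n))
    (m : ℕ) (c : Fin m → ℝ) (hmono : Monotone c)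
    (hrange : ∀ i, c i ∈ Set.Icc (0 : ℝ) n)
    (i : ℕ) (hi : i + 1 < m)
    (hgap : 1 + 2 * δ < c ⟨i + 1, hi⟩ - c ⟨i, Nat.lt_of_succ_lt hi⟩) :
    ∃ j : ℕ, 2 ≤ j ∧ j ≤ n ∧
      (∃ s : Bool, ENNReal.ofReal (1 + δ) ≤ labelMeasure c j s) ∧
      ∃ a b : ℝ, 1 + δ ≤ b - a ∧
        Set.Icc a b ⊆ Set.Icc ((j : ℝ) - 2) (j : ℝ) ∧
        ∀ i', c i' ∉ Set.Ioo a b := by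
  set A := c ⟨i, Nat.lt_of_succ_lt hi⟩ with hA
  set B := c ⟨i + 1, hi⟩ with hB
  have hA0 : (0:ℝ) ≤ A := (hrange _).1
  have hBn : B ≤ (n:ℝ) := (hrange _).2
  have hn' : (2:ℝ) ≤ (n:ℝ) := by exact_mod_cast hn
  have hδsmall : δ < 1 := by
    have h1 : 1 / (2 * (n:ℝ)) ≤ 1 / 4 := by
      apply one_div_le_one_div_of_le <;> linarith
    linarith
  set j : ℕ := ⌈A + 1 + δ⌉₊ with hj
  have hjge : A + 1 + δ ≤ (j:ℝ) := Nat.le_ceil _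
  have hjlt : (j:ℝ) < A + 1 + δ + 1 := Nat.ceil_lt_add_one (by linarith)
  have hgap' : A + 1 + 2 * δ < B := by linarith
  have hjltB : (j:ℝ) < B + 1 - δ := by linarith
  have h2j : 2 ≤ j := by
    have h1 : (1:ℝ) < (j:ℝ) := by linarith
    have := Nat.one_lt_cast.mp h1
    omega
  have hjn : j ≤ n := by
    have h1 : (j:ℝ) < ((n + 1 : ℕ) : ℝ) := by push_cast; linarith
    have := Nat.cast_lt.mp h1
    omega
  set a : ℝ := max A ((j:ℝ) - 2) with ha
  set b : ℝ := min B (j:ℝ) with hb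
  have haA : A ≤ a := le_max_left _ _
  have haj : (j:ℝ) - 2 ≤ a := le_max_right _ _
  have hbB : b ≤ B := min_le_left _ _
  have hbj : b ≤ (j:ℝ) := min_le_right _ _
  have hab : 1 + δ ≤ b - a := by
    have h1 : a ≤ B - (1 + δ) := max_le (by linarith) (by linarith)
    have h2 : a ≤ (j:ℝ) - (1 + δ) := max_le (by linarith) (by linarith)
    have h3 : a + (1 + δ) ≤ b := le_min (by linarith) (by linarith)
    linarith
  have hnocut : ∀ i', c i' ∉ Set.Ioo a b := by
    intro i' hx
    obtain ⟨h1, h2⟩ := hx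
    rcases le_or_gt (i' : ℕ) i with h | h
    · have hle : c i' ≤ A := hmono (Fin.le_def.mpr h)
      linarith
    · have hle : B ≤ c i' := hmono (Fin.le_def.mpr h)
      linarith
  have hlab : ∀ x ∈ Set.Ioo a b, cutLabel c x = cutLabel c b := by
    intro x hx
    obtain ⟨hx1, hx2⟩ := hx
    unfold cutLabel
    congr 1
    have hcard : Nat.card {i' : Fin m // c i' < x} = Nat.card {i' : Fin m // c i' < b} := by
      apply Nat.card_congr
      apply Equiv.subtypeEquivRight
      intro i'
      constructor
      · intro h; linarith
      · intro h
        by_contra hnot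
        push_neg at hnot
        exact hnocut i' ⟨lt_of_lt_of_le hx1 hnot, h⟩
    rw [hcard]
  refine ⟨j, h2j, hjn, ⟨cutLabel c b, ?_⟩, a, b, hab,
    Set.Icc_subset_Icc haj hbj, hnocut⟩
  have hsub : Set.Ioo a b ⊆
      {x : ℝ | x ∈ Set.Icc ((j:ℝ) - 2) (j:ℝ) ∧ cutLabel c x = cutLabel c b} := by
    intro x hx
    exact ⟨⟨by linarith [hx.1], by linarith [hx.2]⟩, hlab x hx⟩
  calc ENNReal.ofReal (1 + δ) ≤ ENNReal.ofReal (b - a) := ENNReal.ofReal_le_ofReal hab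
    _ = MeasureTheory.volume (Set.Ioo a b) := (Real.volume_Ioo).symm
    _ ≤ labelMeasure c j (cutLabel c b) := MeasureTheory.measure_mono hsub
end

section
/- Let n ≥ 2 be an integer and let δ be a real number with 0 < δ < 1/(2n). Let c_1 ≤ … ≤ c_m be a cut configuration in [0,n] with m ≤ n. If two consecutive cuts satisfy c_{i+1} − c_i < 1 − 2nδ, then there exist an integer j with 2 ≤ j ≤ n and a label s ∈ {+,−} such that the measure of s on the monitored interval [j−2,j] is at least 1+δ. -/
namespace Stmt4Aux

open Finset MeasureTheory

/-- extended cut sequence: x_0 = 0, x_t = c_{t-1} for 1 ≤ t ≤ m, x_t = n for t ≥ m+1 -/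
noncomputable def xq (n m : ℕ) (c : Fin m → ℝ) (t : ℕ) : ℝ :=
  if t = 0 then 0 else if h : t - 1 < m then c ⟨t - 1, h⟩ else n

/-- clamp to the window [j-2, j] -/
noncomputable def cl (j : ℕ) (v : ℝ) : ℝ := max ((j : ℝ) - 2) (min (j : ℝ) v)

/-- length of stretch t clipped to window j -/
noncomputable def ln' (n m : ℕ) (c : Fin m → ℝ) (j t : ℕ) : ℝ :=
  cl j (xq n m c (t + 1)) - cl j (xq n m c t)

/-- total clipped length of stretches of parity s in window j -/
noncomputable def Ssum (n m : ℕ) (c : Fin m → ℝ) (j : ℕ) (s : Bool) : ℝ :=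
  ∑ t ∈ Finset.range (m + 1), if decide (Even t) = s then ln' n m c j t else 0

variable {n m : ℕ} {c : Fin m → ℝ}

lemma xq_zero : xq n m c 0 = 0 := by simp [xq]

lemma xq_top {t : ℕ} (h : m + 1 ≤ t) : xq n m c t = n := by
  have h0 : t ≠ 0 := by omega
  have h1 : ¬ (t - 1 < m) := by omega
  simp [xq, h0, h1]

lemma xq_mid {t : ℕ} (h1 : 1 ≤ t) (h2 : t ≤ m) : xq n m c t = c ⟨t - 1, by omega⟩ := by
  have h0 : t ≠ 0 := by omega
  have h1' : t - 1 < m := by omega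
  simp [xq, h0, h1']

lemma xq_mono (hrange : ∀ i, c i ∈ Set.Icc (0 : ℝ) n) (hmono : Monotone c) :
    Monotone (xq n m c) := by
  apply monotone_nat_of_le_succ
  intro t
  rcases Nat.eq_zero_or_pos t with h0 | h0
  · subst h0
    rw [xq_zero]
    rcases le_or_gt 1 m with hm | hm
    · rw [xq_mid le_rfl hm]; exact (hrange _).1
    · rw [xq_top (by omega)]; exact_mod_cast Nat.cast_nonneg n
  · rcases le_or_gt (t + 1) m with hm | hm
    · rw [xq_mid h0 (by omega), xq_mid (by omega) hm]
      exact hmono (by simp only [Fin.le_def]; omega)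
    · rcases le_or_gt t m with hm2 | hm2
      · rw [xq_mid h0 hm2, xq_top (by omega)]
        exact (hrange _).2
      · rw [xq_top (by omega), xq_top (by omega)]



lemma xq_nonneg (hrange : ∀ i, c i ∈ Set.Icc (0 : ℝ) n) (hmono : Monotone c) (t : ℕ) :
    0 ≤ xq n m c t := by
  have := xq_mono (n := n) hrange hmono (Nat.zero_le t)
  rwa [xq_zero] at this

lemma xq_le_n (hrange : ∀ i, c i ∈ Set.Icc (0 : ℝ) n) (hmono : Monotone c) (t : ℕ) :
    xq n m c t ≤ n := by
  rcases le_or_gt t (m + 1) with h | h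
  · have := xq_mono (n := n) hrange hmono h
    rwa [xq_top le_rfl] at this
  · rw [xq_top (by omega)]

lemma cl_mono (j : ℕ) : Monotone (cl j) := fun a b hab => by
  unfold cl; exact max_le_max le_rfl (min_le_min le_rfl hab)

lemma cl_ge (j : ℕ) (v : ℝ) : (j : ℝ) - 2 ≤ cl j v := le_max_left _ _

lemma cl_le (j : ℕ) (v : ℝ) : cl j v ≤ j := by
  unfold cl
  exact max_le (by linarith [Nat.cast_nonneg (α := ℝ) j]) (min_le_left _ _)

lemma cl_lip (j : ℕ) {a b : ℝ} (hab : a ≤ b) : cl j b - cl j a ≤ b - a := by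
  unfold cl
  rw [max_def, max_def, min_def, min_def]
  split_ifs <;> linarith

lemma ln'_nonneg (hrange : ∀ i, c i ∈ Set.Icc (0 : ℝ) n) (hmono : Monotone c) (j t : ℕ) :
    0 ≤ ln' n m c j t := by
  unfold ln'
  have := cl_mono j (xq_mono (n := n) hrange hmono (Nat.le_succ t))
  linarith

lemma count_eq (hrange : ∀ i, c i ∈ Set.Icc (0 : ℝ) n) (hmono : Monotone c)
    {t : ℕ} (ht : t ≤ m) {y : ℝ} (h1 : xq n m c t < y) (h2 : y < xq n m c (t + 1)) :
    Nat.card {i : Fin m // c i < y} = t := by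
  have key : ∀ i : Fin m, c i < y ↔ (i : ℕ) < t := by
    intro i
    constructor
    · intro hiy
      by_contra hit
      push_neg at hit
      have hcit : c ⟨t, by omega⟩ ≤ c i := hmono (by simp only [Fin.le_def]; exact hit)
      have hxt : xq n m c (t + 1) = c ⟨t, by omega⟩ := by
        rw [xq_mid (by omega) (by omega)]
        exact congrArg c (Fin.ext (by simp))
      rw [hxt] at h2
      linarith
    · intro hit
      have h1t : 1 ≤ t := by omega
      have : c i ≤ c ⟨t - 1, by omega⟩ := hmono (by simp only [Fin.le_def]; omega)
      have hxt : xq n m c t = c ⟨t - 1, by omega⟩ := xq_mid h1t ht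
      rw [hxt] at h1
      linarith
  rw [Nat.card_eq_fintype_card, Fintype.card_subtype]
  calc (Finset.univ.filter (fun i : Fin m => c i < y)).card
      = (Finset.univ.filter (fun i : Fin m => (i : ℕ) < t)).card := by
        congr 1; apply Finset.filter_congr; intro i _; simp [key i]
    _ = ∑ i : Fin m, if (i : ℕ) < t then 1 else 0 := by rw [Finset.card_filter]
    _ = ∑ i ∈ Finset.range m, if i < t then 1 else 0 :=
        Fin.sum_univ_eq_sum_range (fun i => if i < t then 1 else 0) m
    _ = ((Finset.range m).filter (· < t)).card := by rw [Finset.card_filter]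
    _ = (Finset.range t).card := by
        congr 1; ext a; simp only [Finset.mem_filter, Finset.mem_range]; omega
    _ = t := Finset.card_range t

lemma label_eq (hrange : ∀ i, c i ∈ Set.Icc (0 : ℝ) n) (hmono : Monotone c)
    {t : ℕ} (ht : t ≤ m) {y : ℝ} (h1 : xq n m c t < y) (h2 : y < xq n m c (t + 1)) :
    cutLabel c y = decide (Even t) := by
  unfold cutLabel
  rw [count_eq hrange hmono ht h1 h2]


lemma Ssum_eq_filter (j : ℕ) (s : Bool) :
    Ssum n m c j s = ∑ t ∈ (Finset.range (m + 1)).filter (fun t => decide (Even t) = s),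
      ln' n m c j t := (Finset.sum_filter _ _).symm

lemma bridge (hrange : ∀ i, c i ∈ Set.Icc (0 : ℝ) n) (hmono : Monotone c)
    {j : ℕ} (hj2 : 2 ≤ j) (hjn : j ≤ n) (s : Bool) :
    ENNReal.ofReal (Ssum n m c j s) ≤ labelMeasure c j s := by
  classical
  set f : ℕ → ℝ := fun t => cl j (xq n m c t) with hf
  have fmono : Monotone f :=
    fun a b hab => cl_mono j (xq_mono (n := n) hrange hmono hab)
  set T := (Finset.range (m + 1)).filter (fun t => decide (Even t) = s) with hT
  have hdisj : (↑T : Set ℕ).PairwiseDisjoint (fun t => Set.Ioo (f t) (f (t + 1))) := by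
    intro a _ b _ hab
    rcases Nat.lt_or_ge a b with h | h
    · apply Set.disjoint_left.2
      intro y hy1 hy2
      have : f (a + 1) ≤ f b := fmono h
      exact absurd (lt_of_lt_of_le hy1.2 this) (not_lt.2 (le_of_lt hy2.1))
    · have h' : b < a := by omega
      apply Set.disjoint_left.2
      intro y hy1 hy2
      have : f (b + 1) ≤ f a := fmono h'
      exact absurd (lt_of_lt_of_le hy2.2 this) (not_lt.2 (le_of_lt hy1.1))
  have hsub : ∀ t ∈ T, Set.Ioo (f t) (f (t + 1)) ⊆
      {x : ℝ | x ∈ Set.Icc ((j : ℝ) - 2) (j : ℝ) ∧ cutLabel c x = s} := by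
    intro t hT' y hy
    obtain ⟨hy1, hy2⟩ := hy
    have htm : t ≤ m := by
      have := (Finset.mem_filter.1 hT').1
      simp only [Finset.mem_range] at this; omega
    have hts : decide (Even t) = s := (Finset.mem_filter.1 hT').2
    have hyl : ((j : ℝ) - 2) ≤ y := le_of_lt (lt_of_le_of_lt (cl_ge j _) hy1)
    have hyr : y ≤ (j : ℝ) := le_of_lt (lt_of_lt_of_le hy2 (cl_le j _))
    have hxy1 : xq n m c t < y := by
      have h1 : min (j : ℝ) (xq n m c t) ≤ f t := le_max_right _ _
      rcases le_total (xq n m c t) (j : ℝ) with h | h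
      · rw [min_eq_right h] at h1; linarith
      · have : (j : ℝ) < y := by
          have := lt_of_le_of_lt (le_trans (min_eq_left h ▸ h1) (le_refl _)) hy1
          linarith [min_eq_left h ▸ h1]
        linarith
    have hxy2 : y < xq n m c (t + 1) := by
      have h1 : f (t + 1) ≤ max ((j : ℝ) - 2) (xq n m c (t + 1)) :=
        max_le_max le_rfl (min_le_right _ _)
      rcases le_total ((j : ℝ) - 2) (xq n m c (t + 1)) with h | h
      · rw [max_eq_right h] at h1; linarith
      · rw [max_eq_left h] at h1; linarith
    refine ⟨⟨hyl, hyr⟩, ?_⟩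
    rw [label_eq hrange hmono htm hxy1 hxy2, hts]
  have hvol : ∀ t ∈ T, volume (Set.Ioo (f t) (f (t + 1))) = ENNReal.ofReal (ln' n m c j t) := by
    intro t _
    rw [Real.volume_Ioo]
    rfl
  calc ENNReal.ofReal (Ssum n m c j s)
      = ENNReal.ofReal (∑ t ∈ T, ln' n m c j t) := by rw [Ssum_eq_filter]
    _ = ∑ t ∈ T, ENNReal.ofReal (ln' n m c j t) := by
        rw [ENNReal.ofReal_sum_of_nonneg]
        intro t hTt
        exact ln'_nonneg hrange hmono j t
    _ = ∑ t ∈ T, volume (Set.Ioo (f t) (f (t + 1))) := by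
        refine Finset.sum_congr rfl ?_
        intro t ht; rw [hvol t ht]
    _ = volume (⋃ t ∈ T, Set.Ioo (f t) (f (t + 1))) :=
        (measure_biUnion_finset hdisj (fun t _ => measurableSet_Ioo)).symm
    _ ≤ labelMeasure c j s := by
        apply measure_mono
        exact Set.iUnion₂_subset hsub

lemma ln'_total (hj2 : 2 ≤ j) (hjn : j ≤ n) :
    ∑ t ∈ Finset.range (m + 1), ln' n m c j t = 2 := by
  unfold ln'
  rw [Finset.sum_range_sub (fun t => cl j (xq n m c t))]
  have h1 : cl j (xq n m c (m + 1)) = j := by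
    rw [xq_top le_rfl]
    unfold cl
    rw [min_eq_left (by exact_mod_cast hjn)]
    exact max_eq_right (by linarith [Nat.cast_nonneg (α := ℝ) j])
  have h2 : cl j (xq n m c 0) = (j : ℝ) - 2 := by
    rw [xq_zero]
    unfold cl
    have hj2' : (2 : ℝ) ≤ j := by exact_mod_cast hj2
    rw [min_eq_right (by linarith)]
    exact max_eq_left (by linarith)
  rw [h1, h2]
  ring

lemma Ssum_total (hj2 : 2 ≤ j) (hjn : j ≤ n) :
    Ssum n m c j true + Ssum n m c j false = 2 := by
  unfold Ssum
  rw [← Finset.sum_add_distrib]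
  have : ∀ t, ((if decide (Even t) = true then ln' n m c j t else 0) +
      (if decide (Even t) = false then ln' n m c j t else 0)) = ln' n m c j t := by
    intro t
    cases h : decide (Even t) <;> simp [h]
  simp_rw [this]
  exact ln'_total hj2 hjn

end Stmt4Aux

open Stmt4Aux

theorem stmt4 (n : ℕ) (hn : 2 ≤ n) (δ : ℝ) (hδ0 : 0 < δ) (hδ1 : δ < 1 / (2 * n))
    (m : ℕ) (hm : m ≤ n) (c : Fin m → ℝ) (hmono : Monotone c)
    (hrange : ∀ i, c i ∈ Set.Icc (0 : ℝ) n)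
    (i : ℕ) (hi : i + 1 < m)
    (hgap : c ⟨i + 1, hi⟩ - c ⟨i, Nat.lt_of_succ_lt hi⟩ < 1 - 2 * n * δ) :
    ∃ j : ℕ, 2 ≤ j ∧ j ≤ n ∧
      ∃ s : Bool, ENNReal.ofReal (1 + δ) ≤ labelMeasure c j s := by
  classical
  set x : ℕ → ℝ := Stmt4Aux.xq n m c with hxdef
  have hn2 : (2 : ℝ) ≤ (n : ℝ) := by exact_mod_cast hn
  have hδn : 2 * (n : ℝ) * δ < 1 := by
    have h2n : (0 : ℝ) < 2 * n := by linarith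
    have := (lt_div_iff₀' h2n).1 hδ1
    linarith
  have hδhalf : δ < 1 / 2 := by nlinarith
  by_cases hA : ∃ t, t ≤ m ∧ 1 + 2 * δ ≤ x (t + 1) - x t
  · -- Case A : a long stretch, capture it
    obtain ⟨t, htm, hlong⟩ := hA
    have hx0 : 0 ≤ x t := xq_nonneg hrange hmono t
    have hxn : x (t + 1) ≤ n := xq_le_n hrange hmono (t + 1)
    set j := ⌈x t + 1 + δ⌉₊ with hjdef
    have hjge : x t + 1 + δ ≤ (j : ℝ) := Nat.le_ceil _
    have hjlt : (j : ℝ) < x t + 1 + δ + 1 := Nat.ceil_lt_add_one (by linarith)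
    have hj2 : 2 ≤ j := by
      have h1 : (1 : ℝ) < (j : ℝ) := by linarith
      exact_mod_cast Nat.one_lt_cast.1 h1
    have hjr : (j : ℝ) ≤ x (t + 1) + 1 - δ := by linarith
    have hjn : j ≤ n := by
      have h1 : (j : ℝ) < (n : ℝ) + 1 := by linarith
      have := Nat.cast_lt (α := ℝ) (m := j) (n := n + 1)
      have h2 : j < n + 1 := by exact_mod_cast h1
      omega
    have hlen : 1 + δ ≤ ln' n m c j t := by
      have A1 : cl j (x t) ≤ max ((j : ℝ) - 2) (x t) :=
        max_le_max le_rfl (min_le_right _ _)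
      have A2 : min ((j : ℝ)) (x (t + 1)) ≤ cl j (x (t + 1)) := le_max_right _ _
      have hll : ln' n m c j t ≥ min ((j : ℝ)) (x (t + 1)) - max ((j : ℝ) - 2) (x t) := by
        unfold ln'
        rw [← hxdef]
        linarith
      rcases le_total ((j : ℝ)) (x (t + 1)) with h1 | h1
      · rw [min_eq_left h1] at hll
        rcases le_total ((j : ℝ) - 2) (x t) with h2 | h2
        · rw [max_eq_right h2] at hll; linarith
        · rw [max_eq_left h2] at hll; linarith
      · rw [min_eq_right h1] at hll
        rcases le_total ((j : ℝ) - 2) (x t) with h2 | h2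
        · rw [max_eq_right h2] at hll; linarith
        · rw [max_eq_left h2] at hll; linarith
    have hsingle : ln' n m c j t ≤ Ssum n m c j (decide (Even t)) := by
      rw [Ssum_eq_filter]
      apply Finset.single_le_sum (f := fun k => ln' n m c j k)
      · intro k _; exact ln'_nonneg hrange hmono j k
      · rw [Finset.mem_filter]; exact ⟨Finset.mem_range.2 (by omega), rfl⟩
    refine ⟨j, hj2, hjn, decide (Even t), ?_⟩
    calc ENNReal.ofReal (1 + δ) ≤ ENNReal.ofReal (Ssum n m c j (decide (Even t))) :=
          ENNReal.ofReal_le_ofReal (by linarith)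
      _ ≤ labelMeasure c j (decide (Even t)) := bridge hrange hmono hj2 hjn _
  · -- Case B : all stretches short
    push_neg at hA
    by_contra hgoal
    push_neg at hgoal
    have hSlt : ∀ jj, 2 ≤ jj → jj ≤ n → ∀ s, Ssum n m c jj s < 1 + δ := by
      intro jj h2 hn' s
      by_contra hS
      push_neg at hS
      have h1 := bridge hrange hmono h2 hn' s
      have h2' : ENNReal.ofReal (1 + δ) ≤ ENNReal.ofReal (Ssum n m c jj s) :=
        ENNReal.ofReal_le_ofReal hS
      exact absurd (le_trans h2' h1) (not_le.2 (hgoal jj h2 hn' s))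
    have hm2 : 2 ≤ m := by omega
    -- base of left chain
    have hx1 : x 1 < 1 + δ := by
      by_contra h
      push_neg at h
      have hl : 1 + δ ≤ ln' n m c 2 0 := by
        have e0 : x 0 = 0 := xq_zero
        have e1 : cl 2 (x 0) = 0 := by
          rw [e0]; unfold cl; norm_num
        have e2 : (1 : ℝ) + δ ≤ cl 2 (x 1) := by
          refine le_trans (le_min ?_ h) (le_max_right _ _)
          push_cast; linarith
        show 1 + δ ≤ cl 2 (x 1) - cl 2 (x 0)
        rw [e1]; linarith
      have hs : ln' n m c 2 0 ≤ Ssum n m c 2 true := by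
        rw [Ssum_eq_filter]
        apply Finset.single_le_sum (f := fun k => ln' n m c 2 k)
        · intro k _; exact ln'_nonneg hrange hmono 2 k
        · rw [Finset.mem_filter]
          refine ⟨Finset.mem_range.2 (by omega), by norm_num⟩
      have := hSlt 2 le_rfl hn true
      linarith
    -- base of right chain
    have hxm : (n : ℝ) - 1 - δ < x m := by
      by_contra h
      push_neg at h
      have hl : 1 + δ ≤ ln' n m c n m := by
        have e1 : cl n (x (m + 1)) = n := by
          rw [show x (m+1) = (n:ℝ) from xq_top le_rfl]
          unfold cl
          rw [min_self]
          exact max_eq_right (by linarith)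
        have e2 : cl n (x m) ≤ (n : ℝ) - 1 - δ := by
          refine le_trans (max_le_max le_rfl (min_le_right _ _)) (max_le ?_ h)
          linarith
        show 1 + δ ≤ cl n (x (m + 1)) - cl n (x m)
        rw [e1]; linarith
      have hs : ln' n m c n m ≤ Ssum n m c n (decide (Even m)) := by
        rw [Ssum_eq_filter]
        apply Finset.single_le_sum (f := fun k => ln' n m c n k)
        · intro k _; exact ln'_nonneg hrange hmono n k
        · rw [Finset.mem_filter]
          exact ⟨Finset.mem_range.2 (by omega), rfl⟩
      have := hSlt n hn le_rfl (decide (Even m))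
      linarith
    -- left chain
    have Lchain : ∀ t, 1 ≤ t → t ≤ m → x t ≤ 1 + δ + ((t : ℝ) - 1) * (1 + 2 * δ) := by
      intro t ht
      induction t, ht using Nat.le_induction with
      | base => intro _; push_cast; linarith
      | succ k hk ih =>
        intro hkm
        have h1 := ih (by omega)
        have h2 := hA k (by omega)
        push_cast
        push_cast at h1
        linarith
    -- right chain
    have Rchain : ∀ d, d ≤ m → x m ≤ x (m - d) + (d : ℝ) * (1 + 2 * δ) := by
      intro d
      induction d with
      | zero => intro _; simp
      | succ k ih =>
        intro hk
        have h1 := ih (by omega)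
        have h2 := hA (m - (k + 1)) (by omega)
        have e : m - (k + 1) + 1 = m - k := by omega
        rw [e] at h2
        push_cast
        push_cast at h1
        linarith
    -- the gap window
    set j := i + 2 with hjdef
    have hj2 : 2 ≤ j := by omega
    have hjn : j ≤ n := by omega
    have hcj : ((j : ℕ) : ℝ) = (i : ℝ) + 2 := by rw [hjdef]; norm_num
    set p := decide (Even (i + 1)) with hpdef
    have hpar : ∀ k : ℕ, decide (Even k) ≠ decide (Even (k + 1)) := by
      intro k; by_cases h : Even k <;> simp [Nat.even_add_one, h]
    have hpar2 : decide (Even (i + 2)) = decide (Even i) := by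
      by_cases h : Even i <;> simp [Nat.even_add_one, h]
    -- split bound
    have hsplit : Ssum n m c j p + ln' n m c j i + ln' n m c j (i + 2) ≤
        ∑ t ∈ Finset.range (m + 1), ln' n m c j t := by
      have hi1 : i ∈ Finset.range (m + 1) := Finset.mem_range.2 (by omega)
      have hi2 : i + 2 ∈ Finset.range (m + 1) := Finset.mem_range.2 (by omega)
      have e1 : ln' n m c j i = ∑ t ∈ Finset.range (m + 1),
          if t = i then ln' n m c j t else 0 := by
        rw [Finset.sum_ite_eq' (Finset.range (m + 1)) i (fun t => ln' n m c j t), if_pos hi1]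
      have e2 : ln' n m c j (i + 2) = ∑ t ∈ Finset.range (m + 1),
          if t = i + 2 then ln' n m c j t else 0 := by
        rw [Finset.sum_ite_eq' (Finset.range (m + 1)) (i + 2) (fun t => ln' n m c j t),
          if_pos hi2]
      rw [e1, e2]
      unfold Ssum
      rw [← Finset.sum_add_distrib, ← Finset.sum_add_distrib]
      apply Finset.sum_le_sum
      intro t _
      have hnn : 0 ≤ ln' n m c j t := ln'_nonneg hrange hmono j t
      by_cases h1 : t = i
      · subst h1
        have hne : ¬ (decide (Even t) = p) := by rw [hpdef]; exact hpar t
        rw [if_neg hne, if_pos rfl, if_neg (by omega : ¬ t = t + 2)]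
        linarith
      · by_cases h2 : t = i + 2
        · subst h2
          have hne : ¬ (decide (Even (i + 2)) = p) := by
            rw [hpdef, hpar2]; exact hpar i
          rw [if_neg hne, if_neg h1, if_pos rfl]
          linarith
        · rw [if_neg h1, if_neg h2]
          by_cases h3 : decide (Even t) = p
          · rw [if_pos h3]; linarith
          · rw [if_neg h3]; linarith
    have htel : ∑ t ∈ Finset.range (m + 1), ln' n m c j t = 2 := ln'_total hj2 hjn
    -- numeric bounds on the three clamped points
    have hfi : cl j (x i) ≤ (i : ℝ) + 2 * i * δ := by
      have hub : cl j (x i) ≤ max ((j : ℝ) - 2) (x i) := max_le_max le_rfl (min_le_right _ _)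
      rcases Nat.eq_zero_or_pos i with h0 | h0
      · subst h0
        refine le_trans hub (max_le ?_ ?_)
        · rw [hcj]; norm_num
        · rw [show x 0 = 0 from xq_zero]; norm_num
      · have hLi := Lchain i h0 (by omega)
        refine le_trans hub (max_le ?_ ?_)
        · rw [hcj]
          have : (0:ℝ) ≤ (i:ℝ) := Nat.cast_nonneg i
          nlinarith
        · have : (1:ℝ) ≤ (i:ℝ) := by exact_mod_cast h0
          nlinarith
    have hgap' : x (i + 2) - x (i + 1) < 1 - 2 * n * δ := by
      have e1 : x (i + 1) = c ⟨i, Nat.lt_of_succ_lt hi⟩ := by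
        rw [hxdef, xq_mid (by omega) (by omega)]
        exact congrArg c (Fin.ext (by simp))
      have e2 : x (i + 2) = c ⟨i + 1, hi⟩ := by
        rw [hxdef, xq_mid (by omega) (by omega)]
        exact congrArg c (Fin.ext (by simp))
      rw [e1, e2]
      exact hgap
    have hlenG : cl j (x (i + 2)) - cl j (x (i + 1)) < 1 - 2 * n * δ := by
      have hmx : x (i + 1) ≤ x (i + 2) := xq_mono hrange hmono (by omega)
      have hlip := cl_lip j hmx
      linarith
    have hfi3 : (j : ℝ) - (2 * (n : ℝ) - 2 * i - 4) * δ ≤ cl j (x (i + 3)) := by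
      have hC : (0 : ℝ) ≤ 2 * (n : ℝ) - 2 * i - 4 := by
        have : (i : ℝ) + 2 ≤ (n : ℝ) := by exact_mod_cast (by omega : i + 2 ≤ n)
        linarith
      rcases le_or_gt (i + 3) m with h | h
      · have hR := Rchain (m - (i + 3)) (by omega)
        have e : m - (m - (i + 3)) = i + 3 := by omega
        rw [e] at hR
        have hcast : ((m - (i + 3) : ℕ) : ℝ) = (m : ℝ) - (i : ℝ) - 3 := by
          rw [Nat.cast_sub h]; push_cast; ring
        rw [hcast] at hR
        have h1 : min ((j : ℝ)) (x (i + 3)) ≤ cl j (x (i + 3)) := le_max_right _ _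
        have hmn : (m : ℝ) ≤ (n : ℝ) := by exact_mod_cast hm
        have him : (i : ℝ) + 3 ≤ (m : ℝ) := by exact_mod_cast h
        rcases le_total ((j : ℝ)) (x (i + 3)) with h2 | h2
        · rw [min_eq_left h2] at h1
          have hq : 0 ≤ (2 * (n : ℝ) - 2 * i - 4) * δ := mul_nonneg hC hδ0.le
          linarith only [h1, hq]
        · rw [min_eq_right h2] at h1
          rw [hcj]
          have q1 : ((m : ℝ) - i - 3) * δ ≤ ((n : ℝ) - i - 3) * δ :=
            mul_le_mul_of_nonneg_right (by linarith only [hmn]) hδ0.le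
          have q2 : ((m : ℝ) - (i : ℝ) - 3) * (1 + 2 * δ) =
              ((m : ℝ) - i - 3) + 2 * (((m : ℝ) - i - 3) * δ) := by ring
          linarith only [h1, hR, hxm, q1, q2, hmn, him, hδ0]
      · have e : i + 3 = m + 1 := by omega
        have e2 : cl j (x (i + 3)) = (j : ℝ) := by
          rw [hxdef, e, xq_top le_rfl]
          unfold cl
          rw [min_eq_left (by exact_mod_cast hjn)]
          exact max_eq_right (by linarith [Nat.cast_nonneg (α := ℝ) j])
        rw [e2]
        have hq : 0 ≤ (2 * (n : ℝ) - 2 * i - 4) * δ := mul_nonneg hC hδ0.le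
        linarith only [hq]
    -- lower bound for Ssum j p
    have hlb : 1 - δ < Ssum n m c j p := by
      have htot := Ssum_total (n := n) (m := m) (c := c) hj2 hjn
      rcases Bool.eq_false_or_eq_true p with hp | hp
      · have h1 := hSlt j hj2 hjn false
        rw [hp]
        linarith
      · have h1 := hSlt j hj2 hjn true
        rw [hp]
        linarith
    -- upper bound
    have hgej : ((j : ℝ) - 2) ≤ cl j (x (i + 1)) := cl_ge j _
    have hub2 : Ssum n m c j p ≤ 2 - ln' n m c j i - ln' n m c j (i + 2) := by
      linarith
    have hlni : ln' n m c j i = cl j (x (i + 1)) - cl j (x i) := rfl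
    have hlni2 : ln' n m c j (i + 2) = cl j (x (i + 3)) - cl j (x (i + 2)) := rfl
    rw [hlni, hlni2] at hub2
    rw [hcj] at hgej hfi3
    linarith only [hlb, hub2, hfi, hlenG, hfi3, hgej, hδ0]
end

section
/- Let n ≥ 1, and for each colour i ∈ {1,…,n} let a_i ≥ 1 be an integer and let t_{i,1}, …, t_{i,2a_i} ∈ [0,1] be the positions of the beads of colour i. Let γ : ℝ → ℝⁿ be the moment curve γ(α) = (α, α², …, αⁿ). Suppose w ∈ ℝⁿ with w ≠ 0 and b ∈ ℝ define a hyperplane that misses all lifted beads and bisects each lifted colour class: for every i and j one has ⟨w, γ(t_{i,j})⟩ ≠ b, and for every i the number of indices j with ⟨w, γ(t_{i,j})⟩ > b equals a_i. Then there exists a finite set Z ⊆ ℝ with at most n elements, containing no bead position, such that for every colour i, the number of indices j for which the cardinality of {z ∈ Z : z < t_{i,j}} is even equals a_i. (Cutting the necklace at the points of Z and giving the resulting pieces alternately to two thieves gives each thief exactly a_i beads of every colour i; thus a ham-sandwich cut of the bead sets embedded in the moment curve yields a 2-thief necklace splitting with at most n cuts.) -/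
/-- The pairing of a normal vector `w ∈ ℝⁿ` with the point `γ(x) = (x, x², …, xⁿ)`
of the moment curve. -/
def momentPairing (n : ℕ) (w : Fin n → ℝ) (x : ℝ) : ℝ :=
  ∑ k : Fin n, w k * x ^ ((k : ℕ) + 1)

/-- Sign constancy on an interval without zeros (IVT). -/
lemma signEqAux {f : ℝ → ℝ} (hf : Continuous f) {x y : ℝ}
    (h : ∀ u, min x y ≤ u → u ≤ max x y → f u ≠ 0) : (0 < f x ↔ 0 < f y) := by
  wlog hxy : x ≤ y generalizing x y
  · exact (this (fun u hu hu' => h u (by rwa [min_comm]) (by rwa [max_comm])) (le_of_not_ge hxy)).symm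
  have h' : ∀ u, x ≤ u → u ≤ y → f u ≠ 0 := fun u h1 h2 =>
    h u (le_trans (min_le_left _ _) h1) (le_trans h2 (le_max_right _ _))
  have hx : f x ≠ 0 := h' x le_rfl hxy
  have hy : f y ≠ 0 := h' y hxy le_rfl
  constructor
  · intro hfx
    by_contra hfy
    have hfy' : f y < 0 := lt_of_le_of_ne (not_lt.mp hfy) hy
    have : (0:ℝ) ∈ Set.Icc (f y) (f x) := ⟨hfy'.le, hfx.le⟩
    obtain ⟨u, hu, hu0⟩ := intermediate_value_Icc' hxy hf.continuousOn this
    exact h' u hu.1 hu.2 hu0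
  · intro hfy
    by_contra hfx
    have hfx' : f x < 0 := lt_of_le_of_ne (not_lt.mp hfx) hx
    have : (0:ℝ) ∈ Set.Icc (f x) (f y) := ⟨hfx'.le, hfy.le⟩
    obtain ⟨u, hu, hu0⟩ := intermediate_value_Icc hxy hf.continuousOn this
    exact h' u hu.1 hu.2 hu0

/-- Key induction: given a continuous `f` whose zeros below `M` lie in the finite set `R`
(all below `M`), there is a subset `Z ⊆ R` of "sign change points" and a base sign `s`
such that for non-roots `t < M`, the sign of `f t` is determined by the parity of the
number of points of `Z` below `t`. -/
lemma keyAux {f : ℝ → ℝ} (hf : Continuous f) (R : Finset ℝ) :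
    ∀ M : ℝ, (∀ x, x < M → f x = 0 → x ∈ R) → (∀ x ∈ R, x < M) →
    ∃ (Z : Finset ℝ) (s : Prop), Z ⊆ R ∧
      ∀ t, t < M → f t ≠ 0 → t ∉ R →
        (0 < f t ↔ (Even (Z.filter (· < t)).card ↔ s)) := by
  induction R using Finset.strongInductionOn with
  | _ R IH =>
  intro M hM hR
  rcases R.eq_empty_or_nonempty with rfl | hne
  · refine ⟨∅, 0 < f (M - 1), Finset.Subset.refl _, fun t ht hft _ => ?_⟩
    have hsign : (0 < f t ↔ 0 < f (M - 1)) := by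
      apply signEqAux hf
      intro u h1 h2
      intro hu0
      have : u < M := lt_of_le_of_lt h2 (by
        rcases max_cases t (M-1) with ⟨h,_⟩ | ⟨h,_⟩ <;> rw [h] <;> linarith)
      exact absurd (hM u this hu0) (Finset.notMem_empty u)
    simpa [Finset.filter_empty] using hsign
  · set r := R.max' hne with hr
    have hrR : r ∈ R := R.max'_mem hne
    have hrM : r < M := hR r hrR
    set R' := R.erase r with hR'
    have hss : R' ⊂ R := Finset.erase_ssubset hrR
    obtain ⟨Z', s', hZ'sub, hZ'⟩ := IH R' hss r
      (fun x hx hx0 => Finset.mem_erase.mpr ⟨ne_of_lt hx, hM x (hx.trans hrM) hx0⟩)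
      (fun x hx => Finset.lt_max'_of_mem_erase_max' R hne hx)
    -- sign on the left of r (for t above all of Z'), and on the right of r
    set sL : Prop := (Even Z'.card ↔ s') with hsL
    set sR : Prop := 0 < f ((r + M) / 2) with hsR
    have hmid1 : r < (r + M) / 2 := by linarith
    have hmid2 : (r + M) / 2 < M := by linarith
    have hright : ∀ x, r < x → x < M → f x ≠ 0 := by
      intro x h1 h2 hx0
      exact absurd (R.le_max' x (hM x h2 hx0)) (not_le.mpr h1)
    -- sign is constant on [r, M) away from zeros
    have hA : ∀ t, r ≤ t → t < M → f t ≠ 0 → (0 < f t ↔ sR) := by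
      intro t h1 h2 hft
      apply signEqAux hf
      intro u hu1 hu2 hu0
      have hur : r ≤ u := le_trans (le_min h1 hmid1.le) hu1
      have huM : u < M := lt_of_le_of_lt hu2 (max_lt h2 hmid2)
      rcases eq_or_lt_of_le hur with heq | hlt
      case inr => exact hright u hlt huM hu0
      case inl =>
        subst heq
        -- u = r : then min t mid ≤ r forces t = r, so f u = f t ≠ 0
        have ht_le : t ≤ r := by
          rcases min_le_iff.mp hu1 with h | h
          · exact h
          · exact absurd h (not_le.mpr hmid1)
        have : t = r := le_antisymm ht_le h1
        exact hft (this ▸ hu0)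
    have hZ'lt : ∀ z ∈ Z', z < r := fun z hz =>
      Finset.lt_max'_of_mem_erase_max' R hne (hZ'sub hz)
    by_cases hcase : (sL ↔ sR)
    · -- no sign change at r
      refine ⟨Z', s', hZ'sub.trans (Finset.erase_subset r R), fun t htM hft htR => ?_⟩
      rcases lt_or_ge t r with htr | hrt
      · exact hZ' t htr hft (fun h => htR (Finset.mem_of_mem_erase h))
      · have hfilt : Z'.filter (· < t) = Z' :=
          Finset.filter_true_of_mem (fun z hz => lt_of_lt_of_le (hZ'lt z hz) hrt)
        rw [hfilt]
        rw [hA t hrt htM hft]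
        exact hcase.symm
    · -- sign change at r
      have hrZ' : r ∉ Z' := fun h => absurd (hZ'lt r h) (lt_irrefl r)
      refine ⟨insert r Z', s', Finset.insert_subset hrR (hZ'sub.trans (Finset.erase_subset r R)),
        fun t htM hft htR => ?_⟩
      rcases lt_or_ge t r with htr | hrt
      · have : (insert r Z').filter (· < t) = Z'.filter (· < t) := by
          rw [Finset.filter_insert, if_neg (not_lt.mpr htr.le)]
        rw [this]
        exact hZ' t htr hft (fun h => htR (Finset.mem_of_mem_erase h))
      · have htr : r < t := lt_of_le_of_ne hrt (fun h => htR (h ▸ hrR))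
        have : (insert r Z').filter (· < t) = insert r (Z'.filter (· < t)) := by
          rw [Finset.filter_insert, if_pos htr]
        rw [this]
        have hfilt : Z'.filter (· < t) = Z' :=
          Finset.filter_true_of_mem (fun z hz => (hZ'lt z hz).trans htr)
        rw [hfilt, Finset.card_insert_of_notMem hrZ']
        rw [hA t hrt htM hft]
        rw [Nat.even_add_one]
        simp only [hsL, hsR] at hcase ⊢
        tauto

lemma cardSubtypeFilter (Z : Finset ℝ) (t : ℝ) :
    Nat.card {z : Z // (z : ℝ) < t} = (Z.filter (· < t)).card := by
  rw [Nat.card_eq_fintype_card, Fintype.card_subtype]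
  apply Finset.card_bij (fun (z : Z) _ => (z : ℝ))
  · intro z hz
    simp only [Finset.mem_filter]
    exact ⟨z.2, by simpa using hz⟩
  · intro z1 _ z2 _ h
    exact Subtype.ext h
  · intro x hx
    simp only [Finset.mem_filter] at hx
    exact ⟨⟨x, hx.1⟩, by simpa using hx.2, rfl⟩

open Polynomial in
lemma momentPoly (n : ℕ) (w : Fin n → ℝ) (hw : w ≠ 0) (b : ℝ) :
    ∃ P : ℝ[X], P ≠ 0 ∧ P.natDegree ≤ n ∧
      ∀ x : ℝ, P.eval x = momentPairing n w x - b := by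
  refine ⟨(∑ k : Fin n, C (w k) * X ^ ((k : ℕ) + 1)) - C b, ?_, ?_, ?_⟩
  · obtain ⟨k, hk⟩ := Function.ne_iff.mp hw
    intro h0
    apply hk
    have := congrArg (fun P => Polynomial.coeff P ((k : ℕ) + 1)) h0
    simp only [coeff_sub, finset_sum_coeff, coeff_C_mul, coeff_X_pow, coeff_zero,
      coeff_C, Nat.succ_ne_zero, if_false] at this
    rw [Finset.sum_eq_single k] at this
    · simpa using this
    · intro j _ hj
      rw [if_neg]
      · ring
      · simp only [add_left_inj]
        exact fun h => hj (Fin.ext h.symm)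
    · simp
  · refine le_trans (natDegree_sub_le _ _) (max_le ?_ (by simp))
    apply Polynomial.natDegree_sum_le_of_forall_le
    intro k _
    refine le_trans (natDegree_mul_le) ?_
    simp only [natDegree_C, natDegree_X_pow, zero_add]
    exact k.2
  · intro x
    simp [momentPairing, eval_finset_sum]


theorem stmt6 (n : ℕ) (hn : 1 ≤ n) (a : Fin n → ℕ) (ha : ∀ i, 1 ≤ a i)
    (t : (i : Fin n) → Fin (2 * a i) → ℝ) (ht : ∀ i j, t i j ∈ Set.Icc (0 : ℝ) 1)
    (w : Fin n → ℝ) (hw : w ≠ 0) (b : ℝ)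
    (hmiss : ∀ i j, momentPairing n w (t i j) ≠ b)
    (hbisect : ∀ i,
      Nat.card {j : Fin (2 * a i) // b < momentPairing n w (t i j)} = a i) :
    ∃ Z : Finset ℝ, Z.card ≤ n ∧ (∀ i j, t i j ∉ Z) ∧
      ∀ i, Nat.card {j : Fin (2 * a i) //
          Even (Nat.card {z : Z // (z : ℝ) < t i j})} = a i := by
  obtain ⟨P, hP0, hPdeg, hPeval⟩ := momentPoly n w hw b
  set f : ℝ → ℝ := fun x => momentPairing n w x - b with hfdef
  have hfc : Continuous f := by
    have h1 : Continuous fun x : ℝ => momentPairing n w x := by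
      unfold momentPairing
      exact continuous_finset_sum _ (fun k _ => by fun_prop)
    fun_prop
  set R : Finset ℝ := P.roots.toFinset with hRdef
  have hRcard : R.card ≤ n :=
    le_trans (Multiset.toFinset_card_le _) (le_trans (Polynomial.card_roots' P) hPdeg)
  have hRiff : ∀ x, x ∈ R ↔ f x = 0 := by
    intro x
    rw [hRdef, Multiset.mem_toFinset, Polynomial.mem_roots hP0, Polynomial.IsRoot, hPeval]
  have hfne : ∀ i j, f (t i j) ≠ 0 := fun i j h => hmiss i j (by
    have := sub_eq_zero.mp h
    simpa using this)
  set M : ℝ := (insert (1:ℝ) R).max' (Finset.insert_nonempty _ _) + 1 with hMdef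
  have hRM : ∀ x ∈ R, x < M := fun x hx =>
    lt_of_le_of_lt (Finset.le_max' _ x (Finset.mem_insert_of_mem hx)) (lt_add_one _)
  have h1M : (1:ℝ) < M :=
    lt_of_le_of_lt (Finset.le_max' _ 1 (Finset.mem_insert_self _ _)) (lt_add_one _)
  obtain ⟨Z, s, hZR, hkey⟩ := keyAux hfc R M (fun x _ hx0 => (hRiff x).mpr hx0) hRM
  have htnotR : ∀ i j, t i j ∉ R := fun i j h => hfne i j ((hRiff _).mp h)
  refine ⟨Z, le_trans (Finset.card_le_card hZR) hRcard,
    fun i j h => htnotR i j (hZR h), fun i => ?_⟩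
  have hkey' : ∀ j, (Even (Nat.card {z : Z // (z : ℝ) < t i j}) ↔ s) ↔
      (b < momentPairing n w (t i j)) := by
    intro j
    have htM : t i j < M := lt_of_le_of_lt (ht i j).2 h1M
    have := hkey (t i j) htM (hfne i j) (htnotR i j)
    rw [cardSubtypeFilter]
    have hpos : (0 < f (t i j)) ↔ (b < momentPairing n w (t i j)) := sub_pos
    rw [← hpos, this]
  by_cases hs : s
  · have : ∀ j : Fin (2 * a i), Even (Nat.card {z : Z // (z : ℝ) < t i j}) ↔
        b < momentPairing n w (t i j) := by
      intro j
      rw [← hkey' j]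
      tauto
    rw [Nat.card_congr (Equiv.subtypeEquivRight this)]
    exact hbisect i
  · have hiff : ∀ j : Fin (2 * a i), Even (Nat.card {z : Z // (z : ℝ) < t i j}) ↔
        ¬ (b < momentPairing n w (t i j)) := by
      intro j
      rw [← hkey' j]
      tauto
    rw [Nat.card_congr (Equiv.subtypeEquivRight hiff)]
    have h1 : Nat.card {j : Fin (2 * a i) // b < momentPairing n w (t i j)} = a i := hbisect i
    rw [Nat.card_eq_fintype_card] at h1 ⊢
    rw [Fintype.card_subtype_compl, Fintype.card_fin, h1]
    omega
end

section
/- Let n ≥ 2 be an integer, τ ∈ [0,1] and α = (α_2,…,α_n) ∈ ℝ^{n−1}, and write x = (x_1,…,x_{n+1}) = Φ(τ,α). (Case 1) If τ > 0 then α_2 = 1/n − x_1/τ, and for every j with 2 ≤ j ≤ n−1, α_{j+1} = ( (j−1+τ)/n + (1−τ)·α_j − Σ_{i=1}^{j} x_i ) / τ. (Case 2) If τ < 1 then α_n = −(n−1+τ)/(n(1−τ)) + (Σ_{i=1}^{n} x_i)/(1−τ), and for every j with 2 ≤ j ≤ n−1, α_j = (τ/(1−τ))·α_{j+1} − (j−1+τ)/(n(1−τ))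 + (Σ_{i=1}^{j} x_i)/(1−τ). (Thus the transformed coordinates can be recovered from the point by forward recursion when τ ≥ 1/2 > 0 and by backward recursion when τ ≤ 1/2 < 1.) -/
/-- The vector `d^τ_i = -τ·e_{i-1} + e_i - (1-τ)·e_{i+1}` of `ℝ^{n+1}`
(`e_1, …, e_{n+1}` is the standard basis, so the 1-indexed position `p`
corresponds to the 0-based index `p - 1`). -/
def dvec (n : ℕ) (τ : ℝ) (i : ℕ) : Fin (n + 1) → ℝ := fun k =>
  if (k : ℕ) + 2 = i then -τ
  else if (k : ℕ) + 1 = i then 1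
  else if (k : ℕ) = i then -(1 - τ) else 0

/-- The origin `0_τ = (τ/n, 1/n, …, 1/n, (1-τ)/n)` of `ℝ^{n+1}`. -/
noncomputable def originVec (n : ℕ) (τ : ℝ) : Fin (n + 1) → ℝ := fun k =>
  if (k : ℕ) = 0 then τ / n else if (k : ℕ) = n then (1 - τ) / n else 1 / n

/-- `Φ(τ, α) = 0_τ + Σ_{i=2}^{n} α_i · d^τ_i`, the point with transformed
coordinates `(τ; α_2, …, α_n)`. -/
noncomputable def Phi (n : ℕ) (τ : ℝ) (α : ℕ → ℝ) : Fin (n + 1) → ℝ := fun k =>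
  originVec n τ k + ∑ i ∈ Finset.Icc 2 n, α i * dvec n τ i k

lemma xval (n : ℕ) (τ : ℝ) (α : ℕ → ℝ) (j : ℕ) (hj : j < n + 1) :
    Phi n τ α ⟨j, hj⟩ = originVec n τ ⟨j, hj⟩
      + ((if j + 2 ≤ n then -τ * α (j + 2) else 0)
      + ((if 1 ≤ j ∧ j + 1 ≤ n then α (j + 1) else 0)
      + (if 2 ≤ j ∧ j ≤ n then -(1 - τ) * α j else 0))) := by
  unfold Phi
  congr 1
  have hcongr : ∀ i ∈ Finset.Icc 2 n, α i * dvec n τ i ⟨j, hj⟩ =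
      (if j + 2 = i then -τ * α i else 0) + ((if j + 1 = i then α i else 0)
        + (if j = i then -(1 - τ) * α i else 0)) := by
    intro i _
    unfold dvec
    simp only [Fin.val_mk]
    split_ifs <;> first | ring1 | (exfalso; omega)
  rw [Finset.sum_congr rfl hcongr, Finset.sum_add_distrib, Finset.sum_add_distrib,
    Finset.sum_ite_eq, Finset.sum_ite_eq, Finset.sum_ite_eq]
  simp only [Finset.mem_Icc]
  split_ifs <;> first | ring1 | (exfalso; omega)

theorem stmt10 (n : ℕ) (hn : 2 ≤ n) (τ : ℝ) (hτ : τ ∈ Set.Icc (0 : ℝ) 1)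
    (α : ℕ → ℝ) (x : Fin (n + 1) → ℝ) (hx : x = Phi n τ α) :
    (0 < τ →
      α 2 = 1 / n - x ⟨0, Nat.succ_pos n⟩ / τ ∧
      ∀ (j : ℕ), 2 ≤ j → j ≤ n - 1 →
        α (j + 1) = (((j : ℝ) - 1 + τ) / n + (1 - τ) * α j
          - ∑ i ∈ Finset.univ.filter (fun i : Fin (n + 1) => (i : ℕ) < j), x i) / τ) ∧
    (τ < 1 →
      α n = -((n : ℝ) - 1 + τ) / (n * (1 - τ))
          + (∑ i ∈ Finset.univ.filter (fun i : Fin (n + 1) => (i : ℕ) < n), x i) / (1 - τ) ∧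
      ∀ (j : ℕ), 2 ≤ j → j ≤ n - 1 →
        α j = (τ / (1 - τ)) * α (j + 1) - ((j : ℝ) - 1 + τ) / (n * (1 - τ))
          + (∑ i ∈ Finset.univ.filter (fun i : Fin (n + 1) => (i : ℕ) < j), x i) / (1 - τ)) := by
  have hnR : (0 : ℝ) < n := by exact_mod_cast Nat.lt_of_lt_of_le (by norm_num) hn
  have hnR0 : (n : ℝ) ≠ 0 := ne_of_gt hnR
  have hstep : ∀ (j : ℕ) (hj : j < n + 1),
      (∑ i ∈ Finset.univ.filter (fun i : Fin (n + 1) => (i : ℕ) < j + 1), x i)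
        = (∑ i ∈ Finset.univ.filter (fun i : Fin (n + 1) => (i : ℕ) < j), x i) + x ⟨j, hj⟩ := by
    intro j hj
    have hset : (Finset.univ.filter (fun i : Fin (n + 1) => (i : ℕ) < j + 1))
        = insert (⟨j, hj⟩ : Fin (n + 1))
            (Finset.univ.filter (fun i : Fin (n + 1) => (i : ℕ) < j)) := by
      ext i
      simp only [Finset.mem_filter, Finset.mem_insert, Finset.mem_univ, true_and, Fin.ext_iff]
      omega
    rw [hset, Finset.sum_insert (by simp)]
    ring
  have key : ∀ j : ℕ, 1 ≤ j → j ≤ n →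
      (∑ i ∈ Finset.univ.filter (fun i : Fin (n + 1) => (i : ℕ) < j), x i)
        = ((j : ℝ) - 1 + τ) / n + (if 2 ≤ j then (1 - τ) * α j else 0)
          - (if j + 1 ≤ n then τ * α (j + 1) else 0) := by
    intro j
    induction j with
    | zero => intro h; exact absurd h (by omega)
    | succ j ih =>
      intro _ hjn
      rcases Nat.eq_zero_or_pos j with rfl | hj1
      · -- base case j+1 = 1
        rw [hstep 0 (Nat.succ_pos n)]
        have h0 : (∑ i ∈ Finset.univ.filter (fun i : Fin (n + 1) => (i : ℕ) < 0), x i) = 0 := by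
          simp
        rw [h0, hx, xval n τ α 0 (Nat.succ_pos n)]
        have ho : originVec n τ ⟨0, Nat.succ_pos n⟩ = τ / n := by
          unfold originVec; simp
        rw [ho]
        rw [if_pos (by omega : 0 + 2 ≤ n), if_neg (by omega), if_neg (by omega),
          if_neg (by omega : ¬ 2 ≤ 0 + 1), if_pos (by omega : 0 + 1 + 1 ≤ n)]
        push_cast
        ring
      · have hj' : j < n + 1 := by omega
        rw [hstep j hj', ih hj1 (by omega), hx, xval n τ α j hj']
        have ho : originVec n τ ⟨j, hj'⟩ = 1 / n := by
          unfold originVec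
          simp only [Fin.val_mk]
          rw [if_neg (by omega), if_neg (by omega)]
        rw [ho]
        push_cast
        split_ifs <;> first | ring1 | (exfalso; omega)
  have hS1 : x ⟨0, Nat.succ_pos n⟩ = τ / n - τ * α 2 := by
    have h := key 1 le_rfl (by omega)
    rw [hstep 0 (Nat.succ_pos n)] at h
    simp only [if_neg (by omega : ¬ 2 ≤ 1), if_pos (by omega : 1 + 1 ≤ n)] at h
    have h0 : (∑ i ∈ Finset.univ.filter (fun i : Fin (n + 1) => (i : ℕ) < 0), x i) = 0 := by
      simp
    rw [h0] at h
    push_cast at h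
    linear_combination h
  constructor
  · intro hτ0
    have hτ0' : τ ≠ 0 := ne_of_gt hτ0
    constructor
    · rw [hS1]
      field_simp
      try ring
    · intro j hj2 hjn
      have hkey := key j (by omega) (by omega)
      rw [if_pos hj2, if_pos (by omega : j + 1 ≤ n)] at hkey
      rw [hkey]
      field_simp
      try ring
  · intro hτ1
    have hτ1' : (1 : ℝ) - τ ≠ 0 := by linarith
    constructor
    · have hkey := key n (by omega) le_rfl
      rw [if_pos hn, if_neg (by omega : ¬ n + 1 ≤ n)] at hkey
      rw [hkey]
      field_simp
      try ring
    · intro j hj2 hjn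
      have hkey := key j (by omega) (by omega)
      rw [if_pos hj2, if_pos (by omega : j + 1 ≤ n)] at hkey
      rw [hkey]
      field_simp
      try ring
end

section
/- Let n ≥ 2 be an integer, τ ∈ [0,1], and α = (α_2,…,α_n) ∈ ℝ^{n−1} with |α_i| ≤ 1/(10n) for all i. Then x = (x_1,…,x_{n+1}) = Φ(τ,α) has nonnegative coordinates summing to 1 (so x lies in the n-dimensional simplex), and x_j ≥ 4/(5n) for every j with 2 ≤ j ≤ n. Consequently the associated cut positions n·(x_1 + … + x_j), for j = 1,…,n, satisfy that each consecutive difference equals n·x_{j+1} ≥ 4/5 > 0; i.e., the cuts encoded by Φ(τ,α) are fairly evenly spaced and do not cross. -/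
lemma dvec_eq (n : ℕ) (τ : ℝ) (i : ℕ) (k : Fin (n+1)) :
    dvec n τ i k = (if i = (k:ℕ)+2 then -τ else 0) + (if i = (k:ℕ)+1 then (1:ℝ) else 0)
      + (if i = (k:ℕ) then -(1-τ) else 0) := by
  unfold dvec
  split_ifs <;> first | (exfalso; omega) | ring

lemma sum_pick (s : Finset ℕ) (f : ℕ → ℝ) (c : ℕ) (v : ℝ) :
    ∑ i ∈ s, f i * (if i = c then v else 0) = if c ∈ s then f c * v else 0 := by
  simp [mul_ite, Finset.sum_ite_eq']

lemma Phi_apply (n : ℕ) (τ : ℝ) (α : ℕ → ℝ) (k : Fin (n+1)) :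
    Phi n τ α k = originVec n τ k
      + (if (k:ℕ)+2 ∈ Finset.Icc 2 n then α ((k:ℕ)+2) * (-τ) else 0)
      + (if (k:ℕ)+1 ∈ Finset.Icc 2 n then α ((k:ℕ)+1) * 1 else 0)
      + (if (k:ℕ) ∈ Finset.Icc 2 n then α (k:ℕ) * (-(1-τ)) else 0) := by
  unfold Phi
  simp_rw [dvec_eq, mul_add, Finset.sum_add_distrib, sum_pick]
  ring

lemma coord_lb (n : ℕ) (hn : 2 ≤ n) (τ : ℝ) (hτ0 : 0 ≤ τ) (hτ1 : τ ≤ 1)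
    (α : ℕ → ℝ) (hα : ∀ i, 2 ≤ i → i ≤ n → |α i| ≤ 1/(10*n)) (k : Fin (n+1)) :
    (0 ≤ Phi n τ α k) ∧ (1 ≤ (k:ℕ) → (k:ℕ)+1 ≤ n → 4/(5*(n:ℝ)) ≤ Phi n τ α k) := by
  have hN : (0:ℝ) < n := by
    have : 0 < n := by omega
    exact_mod_cast this
  rw [Phi_apply]
  unfold originVec
  simp only [Finset.mem_Icc]
  rcases Nat.lt_or_ge (k:ℕ) 1 with hk0 | hk1
  · -- first coordinate
    have hj : (k:ℕ) = 0 := by omega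
    rw [hj]
    have h2 := abs_le.mp (hα 2 le_rfl hn)
    have hα2n : α 2 ≤ 1/(n:ℝ) := by
      refine h2.2.trans ?_
      rw [div_le_div_iff₀ (by positivity) hN]
      nlinarith
    have hkey : (0:ℝ) ≤ τ * (1/(n:ℝ) - α 2) := mul_nonneg hτ0 (by linarith)
    have e : τ * (1/(n:ℝ) - α 2) = τ/n + α (0+2) * -τ := by norm_num; ring
    constructor
    · split_ifs <;> first | (exfalso; omega) | linarith [hkey, e]
    · intro h; omega
  rcases Nat.lt_or_ge (k:ℕ) n with hkn | hkn
  · -- middle coordinates 1 ≤ j ≤ n-1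
    rw [if_neg (by omega), if_neg (by omega), if_pos (by omega : 2 ≤ (k:ℕ)+1 ∧ (k:ℕ)+1 ≤ n)]
    have h2 := abs_le.mp (hα ((k:ℕ)+1) (by omega) (by omega))
    have hT1 : -(τ/(10*(n:ℝ))) ≤
        (if 2 ≤ (k:ℕ)+2 ∧ (k:ℕ)+2 ≤ n then α ((k:ℕ)+2) * (-τ) else 0) := by
      split_ifs with h
      · have hb := abs_le.mp (hα ((k:ℕ)+2) (by omega) h.2)
        have h1 : τ * α ((k:ℕ)+2) ≤ τ * (1/(10*(n:ℝ))) := mul_le_mul_of_nonneg_left hb.2 hτ0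
        have h2 : τ * (1/(10*(n:ℝ))) = τ/(10*n) := by ring
        nlinarith
      · have : 0 ≤ τ/(10*(n:ℝ)) := by positivity
        linarith
    have hT3 : -((1-τ)/(10*(n:ℝ))) ≤
        (if 2 ≤ (k:ℕ) ∧ (k:ℕ) ≤ n then α (k:ℕ) * (-(1-τ)) else 0) := by
      split_ifs with h
      · have hb := abs_le.mp (hα (k:ℕ) h.1 h.2)
        have h1 : (1-τ) * α (k:ℕ) ≤ (1-τ) * (1/(10*(n:ℝ))) :=
          mul_le_mul_of_nonneg_left hb.2 (by linarith)
        have h2 : (1-τ) * (1/(10*(n:ℝ))) = (1-τ)/(10*n) := by ring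
        nlinarith
      · have : 0 ≤ (1-τ)/(10*(n:ℝ)) := by
          apply div_nonneg (by linarith) (by positivity)
        linarith
    have hkey : 1/(n:ℝ) - τ/(10*n) - 1/(10*n) - (1-τ)/(10*n) = 4/(5*n) := by
      field_simp
      ring
    have h45 : (0:ℝ) < 4/(5*(n:ℝ)) := by positivity
    constructor
    · linarith
    · intro _ _; linarith
  · -- last coordinate
    have hj : (k:ℕ) = n := by omega
    rw [hj]
    have h2 := abs_le.mp (hα n hn le_rfl)
    have hαnn : α n ≤ 1/(n:ℝ) := by
      refine h2.2.trans ?_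
      rw [div_le_div_iff₀ (by positivity) hN]
      nlinarith
    have hkey : (0:ℝ) ≤ (1-τ) * (1/(n:ℝ) - α n) :=
      mul_nonneg (by linarith) (by linarith)
    have e : (1-τ) * (1/(n:ℝ) - α n) = (1-τ)/n + α n * -(1-τ) := by ring
    constructor
    · split_ifs <;> first | (exfalso; omega) | linarith [hkey, e]
    · intro _ h; omega

lemma origin_sum (n : ℕ) (hn : 2 ≤ n) (τ : ℝ) :
    ∑ k : Fin (n+1), originVec n τ k = 1 := by
  have hN : (0:ℝ) < n := by
    have : 0 < n := by omega
    exact_mod_cast this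
  have h : ∑ k : Fin (n+1), originVec n τ k
      = ∑ j ∈ Finset.range (n+1),
        (1/(n:ℝ) + (if j = 0 then (τ-1)/n else 0) + (if j = n then -τ/n else 0)) := by
    rw [← Fin.sum_univ_eq_sum_range]
    refine Finset.sum_congr rfl fun k _ => ?_
    unfold originVec
    split_ifs <;> first | (exfalso; omega) | ring
  rw [h, Finset.sum_add_distrib, Finset.sum_add_distrib, Finset.sum_const,
    Finset.card_range, Finset.sum_ite_eq', Finset.sum_ite_eq',
    if_pos (Finset.mem_range.mpr (by omega)), if_pos (Finset.mem_range.mpr (by omega))]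
  rw [nsmul_eq_mul, Nat.cast_add, Nat.cast_one, mul_one_div, ← add_div, ← add_div,
    div_eq_one_iff_eq hN.ne']
  ring

lemma dvec_sum (n : ℕ) (τ : ℝ) (i : ℕ) (hi : i ∈ Finset.Icc 2 n) :
    ∑ k : Fin (n+1), dvec n τ i k = 0 := by
  rw [Finset.mem_Icc] at hi
  have h : ∑ k : Fin (n+1), dvec n τ i k
      = ∑ j ∈ Finset.range (n+1),
        ((if j = i-2 then -τ else 0) + (if j = i-1 then (1:ℝ) else 0)
          + (if j = i then -(1-τ) else 0)) := by
    rw [← Fin.sum_univ_eq_sum_range]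
    refine Finset.sum_congr rfl fun k _ => ?_
    unfold dvec
    split_ifs <;> first | (exfalso; omega) | ring
  rw [h, Finset.sum_add_distrib, Finset.sum_add_distrib, Finset.sum_ite_eq',
    Finset.sum_ite_eq', Finset.sum_ite_eq',
    if_pos (Finset.mem_range.mpr (by omega)), if_pos (Finset.mem_range.mpr (by omega)),
    if_pos (Finset.mem_range.mpr (by omega))]
  ring

lemma Phi_sum (n : ℕ) (hn : 2 ≤ n) (τ : ℝ) (α : ℕ → ℝ) :
    ∑ k : Fin (n+1), Phi n τ α k = 1 := by
  unfold Phi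
  rw [Finset.sum_add_distrib, origin_sum n hn τ, Finset.sum_comm]
  have : ∀ i ∈ Finset.Icc 2 n, ∑ k : Fin (n+1), α i * dvec n τ i k = 0 := by
    intro i hi
    rw [← Finset.mul_sum, dvec_sum n τ i hi, mul_zero]
  rw [Finset.sum_congr rfl this, Finset.sum_const, smul_zero]
  ring

theorem stmt12 (n : ℕ) (hn : 2 ≤ n) (τ : ℝ) (hτ : τ ∈ Set.Icc (0 : ℝ) 1)
    (α : ℕ → ℝ) (hα : ∀ i : ℕ, 2 ≤ i → i ≤ n → |α i| ≤ 1 / (10 * n))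
    (x : Fin (n + 1) → ℝ) (hx : x = Phi n τ α) :
    (∀ k, 0 ≤ x k) ∧ (∑ k : Fin (n + 1), x k = 1) ∧
    (∀ k : Fin (n + 1), 1 ≤ (k : ℕ) → (k : ℕ) + 1 ≤ n → 4 / (5 * n) ≤ x k) ∧
    (∀ (j : ℕ) (_ : 1 ≤ j) (hj : j + 1 ≤ n),
      ((n : ℝ) * ∑ i ∈ Finset.univ.filter (fun i : Fin (n + 1) => (i : ℕ) < j + 1), x i)
        - ((n : ℝ) * ∑ i ∈ Finset.univ.filter (fun i : Fin (n + 1) => (i : ℕ) < j), x i)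
        = n * x ⟨j, by omega⟩ ∧
      4 / 5 ≤ (n : ℝ) * x ⟨j, by omega⟩) := by
  subst hx
  have hN : (0:ℝ) < n := by
    have : 0 < n := by omega
    exact_mod_cast this
  have hcoord := coord_lb n hn τ hτ.1 hτ.2 α hα
  refine ⟨fun k => (hcoord k).1, Phi_sum n hn τ α, fun k h1 h2 => (hcoord k).2 h1 h2, ?_⟩
  intro j hj1 hj
  constructor
  · have hins : (Finset.univ.filter (fun i : Fin (n + 1) => (i : ℕ) < j + 1))
        = insert (⟨j, by omega⟩ : Fin (n+1))
            (Finset.univ.filter (fun i : Fin (n + 1) => (i : ℕ) < j)) := by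
      ext i
      simp only [Finset.mem_filter, Finset.mem_insert, Finset.mem_univ, true_and, Fin.ext_iff]
      omega
    rw [hins, Finset.sum_insert (by simp)]
    ring
  · have h3 := (hcoord ⟨j, by omega⟩).2 (by simpa using hj1) (by simpa using hj)
    have h45 : (n:ℝ) * (4/(5*n)) = 4/5 := by field_simp
    calc (4:ℝ)/5 = (n:ℝ) * (4/(5*n)) := h45.symm
      _ ≤ (n:ℝ) * Phi n τ α ⟨j, by omega⟩ := mul_le_mul_of_nonneg_left h3 hN.le
end

section
/- Let n ≥ 1 be an integer. Suppose that every open necklace with n colours in which every colour occurs an even number of times admits a 2-splitting with at most n cuts. Then every open necklace with n colours in which the number of beads of every colour is divisible by 4 admits a 4-splitting with at most 3n cuts. -/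
/-- `NecklaceSplitting n N beads k t`: the open necklace with `N` beads whose `i`-th
bead has colour `beads i` admits a `k`-splitting with at most `t` cuts.  A cut at
position `z ∈ {1, …, N-1}` separates bead `z - 1` from bead `z`; the assignment
`f` of beads to the `k` thieves must be constant on the blocks between consecutive
cuts, and each thief receives exactly a `1/k` fraction of the beads of each colour. -/
def NecklaceSplitting (n N : ℕ) (beads : ℕ → Fin n) (k t : ℕ) [NeZero k] : Prop :=
  ∃ (Z : Finset ℕ) (f : ℕ → Fin k),
    Z ⊆ Finset.Icc 1 (N - 1) ∧ Z.card ≤ t ∧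
    (∀ i : ℕ, i + 1 ∉ Z → f (i + 1) = f i) ∧
    (∀ (th : Fin k) (c : Fin n),
      k * ((Finset.range N).filter (fun i => beads i = c ∧ f i = th)).card
        = ((Finset.range N).filter (fun i => beads i = c)).card)

/-- Passing between a subsequence (selected by `p`) and the original sequence. -/
lemma count_filter_card (p Q : ℕ → Prop) [DecidablePred p] [DecidablePred Q] (N : ℕ) :
    ((Finset.range N).filter fun i => p i ∧ Q i).card
      = ((Finset.range (Nat.count p N)).filter fun w => Q (Nat.nth p w)).card := by
  have hb : ∀ w, w < Nat.count p N → ∀ hf : (setOf p).Finite, w < hf.toFinset.card :=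
    fun w hw hf => hw.trans_le (Nat.count_le_card hf N)
  apply Finset.card_bij' (fun i _ => Nat.count p i) (fun w _ => Nat.nth p w)
  · intro i hi
    simp only [Finset.mem_filter, Finset.mem_range] at hi ⊢
    refine ⟨Nat.count_strict_mono hi.2.1 hi.1, ?_⟩
    rw [Nat.nth_count hi.2.1]; exact hi.2.2
  · intro w hw
    simp only [Finset.mem_filter, Finset.mem_range] at hw ⊢
    exact ⟨Nat.nth_lt_of_lt_count hw.1, Nat.nth_mem w (hb w hw.1), hw.2⟩
  · intro i hi
    simp only [Finset.mem_filter, Finset.mem_range] at hi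
    exact Nat.nth_count hi.2.1
  · intro w hw
    simp only [Finset.mem_filter, Finset.mem_range] at hw
    exact Nat.count_nth (hb w hw.1)

theorem stmt14 (n : ℕ) (hn : 1 ≤ n)
    (h2 : ∀ (N : ℕ) (beads : ℕ → Fin n),
      (∀ c : Fin n, Even (((Finset.range N).filter (fun i => beads i = c)).card)) →
      NecklaceSplitting n N beads 2 n) :
    ∀ (N : ℕ) (beads : ℕ → Fin n),
      (∀ c : Fin n, 4 ∣ ((Finset.range N).filter (fun i => beads i = c)).card) →
      NecklaceSplitting n N beads 4 (3 * n) := by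
  intro N beads h4
  obtain ⟨Z0, f0, hZ0sub, hZ0card, hf0const, hf0count⟩ :=
    h2 N beads (fun c => by obtain ⟨m, hm⟩ := h4 c; exact ⟨2 * m, by omega⟩)
  -- the two subsequences
  set cnt : Fin 2 → ℕ → ℕ := fun t i => Nat.count (fun j => f0 j = t) i with hcnt
  have key : ∀ t : Fin 2,
      ∃ (Z : Finset ℕ) (g : ℕ → Fin 2),
        Z ⊆ Finset.Icc 1 (cnt t N - 1) ∧ Z.card ≤ n ∧
        (∀ i : ℕ, i + 1 ∉ Z → g (i + 1) = g i) ∧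
        (∀ (th : Fin 2) (c : Fin n),
          2 * ((Finset.range (cnt t N)).filter
              (fun w => beads (Nat.nth (fun j => f0 j = t) w) = c ∧ g w = th)).card
            = ((Finset.range (cnt t N)).filter
              (fun w => beads (Nat.nth (fun j => f0 j = t) w) = c)).card) := by
    intro t
    apply h2
    intro c
    have hbij := count_filter_card (fun j => f0 j = t) (fun i => beads i = c) N
    have heq : ((Finset.range N).filter fun i => (fun j => f0 j = t) i ∧ beads i = c)
        = ((Finset.range N).filter fun i => beads i = c ∧ f0 i = t) := by
      ext i; simp [and_comm]
    rw [← hbij, heq]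
    obtain ⟨m, hm⟩ := h4 c
    have := hf0count t c
    exact ⟨m, by omega⟩
  choose Zt gt hZtsub hZtcard hgconst hgcount using key
  -- the combined assignment
  set enc : Fin 2 → Fin 2 → Fin 4 := fun t s => ⟨2 * t.val + s.val, by omega⟩ with henc
  set f : ℕ → Fin 4 := fun i => enc (f0 i) (gt (f0 i) (cnt (f0 i) i)) with hf
  set Z : Finset ℕ := Z0 ∪ (Finset.Icc 1 (N - 1)).filter
      (fun z => cnt (f0 z) z ∈ Zt (f0 z)) with hZ
  refine ⟨Z, f, ?_, ?_, ?_, ?_⟩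
  · -- subset
    intro z hz
    rcases Finset.mem_union.1 hz with h | h
    · exact hZ0sub h
    · exact (Finset.mem_filter.1 h).1
  · -- cardinality
    have hsub : (Finset.Icc 1 (N - 1)).filter (fun z => cnt (f0 z) z ∈ Zt (f0 z))
        ⊆ ((Finset.Icc 1 (N - 1)).filter (fun z => f0 z = 0 ∧ cnt 0 z ∈ Zt 0)) ∪
          ((Finset.Icc 1 (N - 1)).filter (fun z => f0 z = 1 ∧ cnt 1 z ∈ Zt 1)) := by
      intro z hz
      simp only [Finset.mem_filter, Finset.mem_union] at hz ⊢
      have : f0 z = 0 ∨ f0 z = 1 := by omega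
      rcases this with h | h
      · exact Or.inl ⟨hz.1, h, h ▸ hz.2⟩
      · exact Or.inr ⟨hz.1, h, h ▸ hz.2⟩
    have hcard : ∀ t : Fin 2,
        ((Finset.Icc 1 (N - 1)).filter (fun z => f0 z = t ∧ cnt t z ∈ Zt t)).card ≤ n := by
      intro t
      refine le_trans (Finset.card_le_card_of_injOn (fun z => cnt t z)
        (fun z hz => ?_) (fun z₁ hz₁ z₂ hz₂ hzz => ?_)) (hZtcard t)
      · exact (Finset.mem_filter.1 hz).2.2
      · simp only [Finset.coe_filter, Set.mem_setOf_eq] at hz₁ hz₂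
        by_contra hne
        rcases lt_or_gt_of_ne hne with h | h
        · exact absurd hzz (Nat.count_strict_mono hz₁.2.1 h).ne
        · exact absurd hzz.symm (Nat.count_strict_mono hz₂.2.1 h).ne
    calc Z.card ≤ Z0.card +
        ((Finset.Icc 1 (N - 1)).filter (fun z => cnt (f0 z) z ∈ Zt (f0 z))).card :=
          Finset.card_union_le _ _
      _ ≤ n + (n + n) := by
          refine Nat.add_le_add hZ0card (le_trans (Finset.card_le_card hsub) ?_)
          exact le_trans (Finset.card_union_le _ _) (Nat.add_le_add (hcard 0) (hcard 1))
      _ = 3 * n := by ring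
  · -- constancy
    intro i hi
    have hi0 : i + 1 ∉ Z0 := fun h => hi (Finset.mem_union_left _ h)
    have hf0 : f0 (i + 1) = f0 i := hf0const i hi0
    set t := f0 i with ht
    have hcnt1 : cnt t (i + 1) = cnt t i + 1 := by
      simp [hcnt, Nat.count_succ]
      exact ht.symm
    have hnot : cnt t i + 1 ∉ Zt t := by
      intro hmem
      have hIcc := hZtsub t hmem
      rw [Finset.mem_Icc] at hIcc
      have hltN : i + 1 < N := by
        by_contra hge
        have hmono : cnt t N ≤ cnt t (i + 1) :=
          Nat.count_monotone _ (by omega)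
        omega
      apply hi
      refine Finset.mem_union_right _ (Finset.mem_filter.2 ⟨?_, ?_⟩)
      · rw [Finset.mem_Icc]; omega
      · rw [hf0, hcnt1]; exact hmem
    rw [hf]
    simp only [hf0, ← ht, hcnt1]
    rw [hgconst t _ hnot]
  · -- counting
    intro th c
    set t : Fin 2 := ⟨th.val / 2, by omega⟩ with hT
    set s : Fin 2 := ⟨th.val % 2, by omega⟩ with hS
    have hencth : ∀ (a b : Fin 2), enc a b = th ↔ (a = t ∧ b = s) := by
      intro a b
      have ha := a.isLt; have hb := b.isLt; have hth := th.isLt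
      rw [Fin.ext_iff, Fin.ext_iff, Fin.ext_iff]
      simp only [henc, hT, hS]
      omega
    have hXY : ((Finset.range N).filter fun i => beads i = c ∧ f i = th)
        = ((Finset.range N).filter fun i => (fun j => f0 j = t) i ∧
            (beads i = c ∧ gt t (cnt t i) = s)) := by
      ext i
      simp only [Finset.mem_filter, Finset.mem_range, hf, hencth]
      constructor
      · rintro ⟨h1, h2, h3, h4⟩
        exact ⟨h1, h3, h2, h3 ▸ h4⟩
      · rintro ⟨h1, h2, h3, h4⟩
        exact ⟨h1, h3, h2, h2 ▸ h4⟩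
    have hbij1 := count_filter_card (fun j => f0 j = t)
      (fun i => beads i = c ∧ gt t (cnt t i) = s) N
    have hstep : ((Finset.range (cnt t N)).filter
          fun w => beads (Nat.nth (fun j => f0 j = t) w) = c ∧
            gt t (cnt t (Nat.nth (fun j => f0 j = t) w)) = s)
        = ((Finset.range (cnt t N)).filter
          fun w => beads (Nat.nth (fun j => f0 j = t) w) = c ∧ gt t w = s) := by
      apply Finset.filter_congr
      intro w hw
      rw [Finset.mem_range] at hw
      have : cnt t (Nat.nth (fun j => f0 j = t) w) = w :=
        Nat.count_nth (fun hf' => hw.trans_le (Nat.count_le_card hf' N))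
      rw [this]
    have hbij2 := count_filter_card (fun j => f0 j = t) (fun i => beads i = c) N
    have heq2 : ((Finset.range N).filter fun i => (fun j => f0 j = t) i ∧ beads i = c)
        = ((Finset.range N).filter fun i => beads i = c ∧ f0 i = t) := by
      ext i; simp [and_comm]
    have hg := hgcount t s c
    have hf0c := hf0count t c
    rw [hXY, hbij1]
    simp only [hcnt] at hstep hg ⊢
    rw [hstep]
    rw [heq2] at hbij2
    omega
end
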